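/- arXiv:1308.3355 — 3 statements merged into one kernel-verified Lean document; each statement's English description precedes it below -/
import Mathlib

section
/- Let m and k be odd positive integers with k < m and gcd(k, m) = 1. Let e = 2^{m-1} - 2^{k-1} - 1, let L(x) = Σ_{i=0}^{k-1} x^{2^i}, and define f : F_{2^m} → F_{2^m} by f(x) = x^e · L(x). Let d be a positive integer with d·(2^k - 1) ≡ 1 (mod 2^{2m} - 1). Then f is a bijection of F_{2^m}, and its inverse is the map x ↦ (D_d(x^2))^{-1}; that is, for every x ∈ F_{2^m} one has f((D_d(x^2))^{-1}) = x and (D_d(f(x)^2))^{-1} = x. -/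
instance : Fact (Nat.Prime 2) := ⟨Nat.prime_two⟩

/-- The Dickson polynomial of the first kind with parameter 1, evaluated at `x`:
`D_d(x) = Σ_{i=0}^{⌊d/2⌋} (d/(d-i))·binom(d-i, i)·x^(d-2i)`, with the integer
coefficients cast into the field (hence reduced modulo 2). -/
noncomputable def dicksonEval {m : ℕ} (d : ℕ) (x : GaloisField 2 m) : GaloisField 2 m :=
  ∑ i ∈ Finset.range (d / 2 + 1),
    ((d * Nat.choose (d - i) i / (d - i) : ℕ) : GaloisField 2 m) * x ^ (d - 2 * i)

open Finset

section Combinatorics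

/-- coefficient identity -/
private lemma c_eq (n i : ℕ) (h1 : 1 ≤ i) (h2 : 2 * i ≤ n) :
    n * Nat.choose (n - i) i / (n - i) = Nat.choose (n - i) i + Nat.choose (n - i - 1) (i - 1) := by
  have hin : i ≤ n - i := by omega
  have hpos : 0 < n - i := by omega
  have key : (n - i) * Nat.choose (n - i - 1) (i - 1) = Nat.choose (n - i) i * i := by
    have := Nat.add_one_mul_choose_eq (n - i - 1) (i - 1)
    have e1 : n - i - 1 + 1 = n - i := by omega
    have e2 : i - 1 + 1 = i := by omega
    rwa [e1, e2] at this
  have : n * Nat.choose (n - i) i = (Nat.choose (n - i) i + Nat.choose (n - i - 1) (i - 1)) * (n - i) := by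
    have hn : n = (n - i) + i := by omega
    calc n * Nat.choose (n - i) i = (n - i) * Nat.choose (n - i) i + Nat.choose (n - i) i * i := by
          nth_rewrite 1 [hn]; ring
      _ = (Nat.choose (n - i) i + Nat.choose (n - i - 1) (i - 1)) * (n - i) := by
          rw [← key]; ring
  rw [this, Nat.mul_div_cancel _ hpos]

variable {R : Type*} [CommRing R]

/-- Fibonacci-like polynomial sum -/
private noncomputable def fibP (n : ℕ) (x : R) : R :=
  ∑ i ∈ Finset.range (n / 2 + 1), ((n - i).choose i : R) * x ^ (n - 2 * i)

private lemma fibP_rec (n : ℕ) (x : R) : fibP (n + 2) x = x * fibP (n + 1) x + fibP n x := by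
  have h1 : (n + 2) / 2 + 1 = (n / 2 + 1) + 1 := by omega
  have peel : fibP (n + 2) x
      = (∑ i ∈ range (n / 2 + 1), (((n + 1 - i).choose (i + 1) : R)) * x ^ (n - 2 * i)) + x ^ (n + 2) := by
    rw [fibP, h1, Finset.sum_range_succ']
    congr 1
    · refine Finset.sum_congr rfl fun i hi => ?_
      simp only [Finset.mem_range] at hi
      have e1 : n + 2 - (i + 1) = n + 1 - i := by omega
      have e2 : n + 2 - 2 * (i + 1) = n - 2 * i := by omega
      rw [e1, e2]
    · norm_num
  have split : ∀ i, i ∈ range (n / 2 + 1) → (((n + 1 - i).choose (i + 1) : R)) * x ^ (n - 2 * i)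
      = ((n - i).choose i : R) * x ^ (n - 2 * i) + ((n - i).choose (i + 1) : R) * x ^ (n - 2 * i) := by
    intro i hi
    simp only [Finset.mem_range] at hi
    have e1 : n + 1 - i = (n - i) + 1 := by omega
    rw [e1, Nat.choose_succ_succ']
    push_cast
    ring
  rw [peel, Finset.sum_congr rfl split, Finset.sum_add_distrib]
  have hxA : x * fibP (n + 1) x
      = (∑ i ∈ range ((n + 1) / 2), ((n - i).choose (i + 1) : R) * x ^ (n - 2 * i)) + x ^ (n + 2) := by
    rw [fibP, Finset.mul_sum]
    rw [Finset.sum_range_succ']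
    congr 1
    · refine Finset.sum_congr rfl fun i hi => ?_
      simp only [Finset.mem_range] at hi
      have e1 : n + 1 - (i + 1) = n - i := by omega
      have e2 : x * x ^ (n + 1 - 2 * (i + 1)) = x ^ (n - 2 * i) := by
        rw [← pow_succ']
        congr 1
        omega
      rw [e1, ← mul_assoc, mul_comm x, mul_assoc, e2]
    · have : x * (((n + 1 - 0).choose 0 : R)) * x ^ (n + 1 - 2 * 0) = x * x ^ (n + 1) := by
        norm_num
      simpa [← pow_succ'] using this
  have hT : (∑ i ∈ range (n / 2 + 1), ((n - i).choose (i + 1) : R) * x ^ (n - 2 * i))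
      = ∑ i ∈ range ((n + 1) / 2), ((n - i).choose (i + 1) : R) * x ^ (n - 2 * i) := by
    rcases Nat.even_or_odd n with ⟨t, rfl⟩ | ⟨t, rfl⟩
    · have h2 : (t + t) / 2 + 1 = (t + t + 1) / 2 + 1 := by omega
      rw [h2, Finset.sum_range_succ]
      have hz : (t + t - (t + t + 1) / 2).choose ((t + t + 1) / 2 + 1) = 0 := by
        apply Nat.choose_eq_zero_of_lt; omega
      rw [hz]
      push_cast
      ring
    · have h2 : (2 * t + 1) / 2 + 1 = (2 * t + 1 + 1) / 2 := by omega
      rw [h2]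
  rw [hT, hxA, fibP]
  ring

private noncomputable def dickE (d : ℕ) (x : R) : R :=
  ∑ i ∈ Finset.range (d / 2 + 1),
    ((d * Nat.choose (d - i) i / (d - i) : ℕ) : R) * x ^ (d - 2 * i)

private lemma dickE_zero (x : R) : dickE 0 x = 0 := by simp [dickE]

private lemma dickE_one (x : R) : dickE 1 x = x := by simp [dickE]

private lemma dickE_eq_fibP (n : ℕ) (x : R) :
    dickE (n + 2) x = fibP (n + 2) x + fibP n x := by
  have h1 : (n + 2) / 2 + 1 = (n / 2 + 1) + 1 := by omega
  rw [dickE, h1, Finset.sum_range_succ']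
  have hfib : fibP (n + 2) x
      = (∑ i ∈ range (n / 2 + 1), (((n + 1 - i).choose (i + 1) : R)) * x ^ (n - 2 * i)) + x ^ (n + 2) := by
    rw [fibP, h1, Finset.sum_range_succ']
    congr 1
    · refine Finset.sum_congr rfl fun i hi => ?_
      simp only [Finset.mem_range] at hi
      have e1 : n + 2 - (i + 1) = n + 1 - i := by omega
      have e2 : n + 2 - 2 * (i + 1) = n - 2 * i := by omega
      rw [e1, e2]
    · norm_num
  have hterm : ∀ i, i ∈ range (n / 2 + 1) →
      (((n + 2) * ((n + 2) - (i + 1)).choose (i + 1) / ((n + 2) - (i + 1)) : ℕ) : R) * x ^ (n + 2 - 2 * (i + 1))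
      = (((n + 1 - i).choose (i + 1) : R)) * x ^ (n - 2 * i) + ((n - i).choose i : R) * x ^ (n - 2 * i) := by
    intro i hi
    simp only [Finset.mem_range] at hi
    have e2 : n + 2 - 2 * (i + 1) = n - 2 * i := by omega
    have hc := c_eq (n + 2) (i + 1) (by omega) (by omega)
    have e3 : n + 2 - (i + 1) = n + 1 - i := by omega
    have e4 : n + 1 - i - 1 = n - i := by omega
    have e5 : i + 1 - 1 = i := by omega
    rw [e3, e4, e5] at hc
    rw [e2, e3, hc]
    push_cast
    ring
  rw [Finset.sum_congr rfl hterm, Finset.sum_add_distrib, hfib]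
  have e0 : (((n + 2) * ((n + 2) - 0).choose 0 / ((n + 2) - 0) : ℕ) : R) * x ^ (n + 2 - 2 * 0)
      = x ^ (n + 2) := by
    simp
  rw [e0, fibP]
  ring

private lemma dickE_rec [CharP R 2] (n : ℕ) (x : R) :
    dickE (n + 2) x = x * dickE (n + 1) x + dickE n x := by
  have h2 : (2 : R) = 0 := by exact_mod_cast CharP.cast_eq_zero R 2
  match n with
  | 0 =>
    rw [dickE_zero, dickE_one, dickE_eq_fibP]
    simp [fibP, Finset.sum_range_succ]
    linear_combination h2
  | 1 =>
    rw [dickE_eq_fibP, dickE_eq_fibP, dickE_one]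
    simp [fibP, Finset.sum_range_succ]
    ring
  | (n + 2) =>
    rw [dickE_eq_fibP, dickE_eq_fibP, dickE_eq_fibP, fibP_rec (n + 2), fibP_rec n]
    ring

private lemma dickE_add_inv {K : Type*} [Field K] [CharP K 2] (w : K) (hw : w ≠ 0) (d : ℕ) :
    dickE d (w + w⁻¹) = w ^ d + (w⁻¹) ^ d := by
  have h2 : (2 : K) = 0 := by exact_mod_cast CharP.cast_eq_zero K 2
  have hv : w * w⁻¹ = 1 := mul_inv_cancel₀ hw
  induction d using Nat.strong_induction_on with
  | _ d ih =>
    match d with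
    | 0 => simp [dickE_zero]; linear_combination -h2
    | 1 => simp [dickE_one]
    | (n + 2) =>
      rw [dickE_rec, ih (n + 1) (by omega), ih n (by omega)]
      linear_combination (w ^ n + (w⁻¹) ^ n) * hv + (w ^ n + (w⁻¹) ^ n) * h2

private lemma dickE_zero_arg [CharP R 2] (d : ℕ) : dickE d (0 : R) = 0 := by
  have h2 : (2 : R) = 0 := by exact_mod_cast CharP.cast_eq_zero R 2
  rw [dickE]
  apply Finset.sum_eq_zero
  intro i hi
  simp only [Finset.mem_range] at hi
  rcases Nat.eq_zero_or_pos (d - 2 * i) with hz | hp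
  · have hd2 : d = 2 * i := by omega
    rcases Nat.eq_zero_or_pos i with rfl | hip
    · subst hd2; simp
    · have : d * (d - i).choose i / (d - i) = 2 := by
        subst hd2
        have e1 : 2 * i - i = i := by omega
        rw [e1, Nat.choose_self, mul_one, Nat.mul_div_cancel _ hip]
      rw [this, hz]
      simp [h2]
  · rw [zero_pow (by omega)]
    ring

private lemma map_dickE {S : Type*} [CommRing S] (φ : R →+* S) (d : ℕ) (x : R) :
    φ (dickE d x) = dickE d (φ x) := by
  simp [dickE, map_sum]

/-- telescoping linearized-polynomial sum -/
private lemma sumL {K : Type*} [Field K] [CharP K 2] (γ : K) (n : ℕ) :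
    ∑ i ∈ Finset.range n, (γ ^ 2 + γ) ^ (2 ^ i) = γ ^ (2 ^ n) + γ := by
  have h2 : (2 : K) = 0 := by exact_mod_cast CharP.cast_eq_zero K 2
  induction n with
  | zero => simp; linear_combination -γ * h2
  | succ n ih =>
    rw [Finset.sum_range_succ, ih, add_pow_char_pow (γ ^ 2) γ 2 n]
    have e : (γ ^ 2) ^ (2 ^ n) = (γ ^ (2 ^ n)) ^ 2 := by
      rw [← pow_mul, ← pow_mul, mul_comm]
    rw [e]
    have e2 : γ ^ (2 ^ (n + 1)) = (γ ^ (2 ^ n)) ^ 2 := by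
      rw [← pow_mul, pow_succ]
    rw [e2]
    linear_combination (γ ^ (2 ^ n)) * h2

end Combinatorics

private lemma dicksonEval_eq_dickE {m : ℕ} (d : ℕ) (x : GaloisField 2 m) :
    dicksonEval d x = dickE d x := rfl

theorem stmt0 (m k : ℕ) (hmpos : 0 < m) (hkpos : 0 < k) (hm : Odd m) (hk : Odd k)
    (hkm : k < m) (hgcd : Nat.gcd k m = 1)
    (d : ℕ) (hdpos : 0 < d) (hd : d * (2 ^ k - 1) ≡ 1 [MOD 2 ^ (2 * m) - 1])
    (f : GaloisField 2 m → GaloisField 2 m)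
    (hf : ∀ x, f x = x ^ (2 ^ (m - 1) - 2 ^ (k - 1) - 1) * ∑ i ∈ Finset.range k, x ^ (2 ^ i)) :
    Function.Bijective f ∧
      (∀ x, f ((dicksonEval d (x ^ 2))⁻¹) = x) ∧
      (∀ x, (dicksonEval d ((f x) ^ 2))⁻¹ = x) := by
  classical
  haveI : Fintype (GaloisField 2 m) := Fintype.ofFinite _
  set K := AlgebraicClosure (GaloisField 2 m) with hKdef
  haveI hK2 : CharP K 2 :=
    charP_of_injective_algebraMap (algebraMap (GaloisField 2 m) K).injective 2
  set φ := algebraMap (GaloisField 2 m) K with hφdef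
  have hφ : Function.Injective φ := φ.injective
  have h2K : (2 : K) = 0 := by exact_mod_cast CharP.cast_eq_zero K 2
  -- key computation
  have key : ∀ x : GaloisField 2 m, dicksonEval d ((f x) ^ 2) = x⁻¹ := by
    intro x
    rcases eq_or_ne x 0 with rfl | hx
    · have hf0 : f 0 = 0 := by
        rw [hf]
        have hs : ∑ i ∈ Finset.range k, (0 : GaloisField 2 m) ^ (2 ^ i) = 0 :=
          Finset.sum_eq_zero fun i _ => zero_pow (Nat.two_pow_pos i).ne'
        rw [hs, mul_zero]
      rw [hf0, dicksonEval_eq_dickE]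
      rw [zero_pow two_ne_zero, dickE_zero_arg, inv_zero]
    · apply hφ
      rw [dicksonEval_eq_dickE, map_dickE, map_inv₀]
      set X := φ x with hX
      have hXne : X ≠ 0 := fun h => hx (hφ (by rw [map_zero, ← hX]; exact h))
      -- a root γ of Y² + Y = X
      obtain ⟨γ, hγ0⟩ : ∃ γ : K, γ ^ 2 + γ + X = 0 := by
        obtain ⟨γ, hγ⟩ := IsAlgClosed.exists_root
          (Polynomial.X ^ 2 + Polynomial.X + Polynomial.C X) (by
            have hdeg : (Polynomial.X ^ 2 + Polynomial.X + Polynomial.C X).degree = 2 := by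
              compute_degree!
            rw [hdeg]; norm_num)
        refine ⟨γ, ?_⟩
        have := hγ
        rw [Polynomial.IsRoot.def] at this
        simpa using this
      have hγX : γ ^ 2 + γ = X := by linear_combination hγ0 - X * h2K
      have ha : γ ≠ 0 := by
        intro h; apply hXne; rw [← hγX, h]; ring
      have hb : γ + 1 ≠ 0 := by
        intro h
        have h1 : γ = 1 := by linear_combination h - h2K
        apply hXne
        rw [← hγX, h1]
        linear_combination h2K
      have hbp : ∀ N : ℕ, (γ + 1) ^ (2 ^ N) = γ ^ (2 ^ N) + 1 := by
        intro N
        rw [add_pow_char_pow γ 1 2 N, one_pow]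
      have hXab : X = γ * (γ + 1) := by rw [← hγX]; ring
      -- x^(2^m) = x
      have hxF : x ^ (2 ^ m) = x := by
        have hc : Fintype.card (GaloisField 2 m) = 2 ^ m := by
          rw [← Nat.card_eq_fintype_card]; exact GaloisField.card 2 m (by omega)
        rw [← hc]; exact FiniteField.pow_card x
      have hXm : X ^ (2 ^ m) = X := by rw [hX, ← map_pow, hxF]
      have hX1 : X ^ (2 ^ m - 1) = 1 := by
        have h1 : X ^ (2 ^ m - 1) * X = 1 * X := by
          rw [← pow_succ, one_mul]
          have e : 2 ^ m - 1 + 1 = 2 ^ m := by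
            have := Nat.one_le_two_pow (n := m); omega
          rw [e, hXm]
        exact mul_right_cancel₀ hXne h1
      -- γ^(2^(2m)) = γ
      have hγ2m : γ ^ (2 ^ (2 * m)) = γ := by
        have hfrob : (γ ^ (2 ^ m)) ^ 2 + γ ^ (2 ^ m) = X := by
          have h1 : (γ ^ 2 + γ) ^ (2 ^ m) = X := by rw [hγX, hXm]
          rw [add_pow_char_pow (γ ^ 2) γ 2 m] at h1
          rw [← h1]
          congr 1
          rw [← pow_mul, ← pow_mul, mul_comm]
        set δ := γ ^ (2 ^ m) + γ with hδdef
        have hδ : δ * (δ + 1) = 0 := by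
          have hsq : δ ^ 2 = (γ ^ (2 ^ m)) ^ 2 + γ ^ 2 := by
            rw [hδdef, add_pow_char (γ ^ (2 ^ m)) γ]
          have h0 : δ ^ 2 + δ = 0 := by
            rw [hsq, hδdef]
            linear_combination hfrob + hγX + X * h2K
          linear_combination h0
        have hδ2m : δ ^ (2 ^ m) = δ := by
          rcases mul_eq_zero.mp hδ with h0 | h1
          · rw [h0]; rw [zero_pow (by positivity)]
          · have : δ = 1 := by linear_combination h1 - h2K
            rw [this, one_pow]
        have hgm : γ ^ (2 ^ m) = γ + δ := by linear_combination -hδdef - γ * h2K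
        calc γ ^ (2 ^ (2 * m)) = (γ ^ (2 ^ m)) ^ (2 ^ m) := by
              rw [← pow_mul, two_mul, pow_add]
          _ = (γ + δ) ^ (2 ^ m) := by rw [hgm]
          _ = γ ^ (2 ^ m) + δ ^ (2 ^ m) := add_pow_char_pow γ δ 2 m
          _ = (γ + δ) + δ := by rw [hgm, hδ2m]
          _ = γ := by linear_combination δ * h2K
      -- u
      set u := γ * (γ + 1)⁻¹ with hu
      have hune : u ≠ 0 := mul_ne_zero ha (inv_ne_zero hb)
      have hu2m : u ^ (2 ^ (2 * m)) = u := by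
        rw [hu, mul_pow, inv_pow, hbp (2 * m), hγ2m]
      have huN : u ^ (2 ^ (2 * m) - 1) = 1 := by
        have h1 : u ^ (2 ^ (2 * m) - 1) * u = 1 * u := by
          rw [← pow_succ, one_mul]
          have e : 2 ^ (2 * m) - 1 + 1 = 2 ^ (2 * m) := by
            have := Nat.one_le_two_pow (n := 2 * m); omega
          rw [e, hu2m]
        exact mul_right_cancel₀ hune h1
      -- u^(d·(2^k−1)) = u
      have hN2 : 2 ≤ 2 ^ (2 * m) - 1 := by
        have h4 : 4 ≤ 2 ^ (2 * m) := by
          calc 4 = 2 ^ 2 := by norm_num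
            _ ≤ 2 ^ (2 * m) := Nat.pow_le_pow_right (by norm_num) (by omega)
        omega
      have hdc : d * (2 ^ k - 1) % (2 ^ (2 * m) - 1) = 1 := by
        have h1 : (1 : ℕ) % (2 ^ (2 * m) - 1) = 1 := Nat.mod_eq_of_lt (by omega)
        have := hd
        unfold Nat.ModEq at this
        rw [h1] at this
        exact this
      have hud : u ^ (d * (2 ^ k - 1)) = u := by
        have hexp : d * (2 ^ k - 1)
            = (2 ^ (2 * m) - 1) * (d * (2 ^ k - 1) / (2 ^ (2 * m) - 1)) + 1 := by
          conv_lhs => rw [← Nat.div_add_mod (d * (2 ^ k - 1)) (2 ^ (2 * m) - 1)]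
          rw [hdc]
        rw [hexp, pow_add, pow_mul, huN, one_pow, one_mul, pow_one]
      -- c and w
      set c := 2 ^ k - 1 with hcdef
      have hc1 : c + 1 = 2 ^ k := by
        have := Nat.one_le_two_pow (n := k); omega
      set w := u ^ c with hwdef
      have hwne : w ≠ 0 := pow_ne_zero _ hune
      have hwd : w ^ d = u := by
        rw [hwdef, ← pow_mul]
        rw [show c * d = d * (2 ^ k - 1) by rw [hcdef]; ring]
        exact hud
      -- L sum
      have hL : φ (∑ i ∈ Finset.range k, x ^ (2 ^ i)) = γ ^ (2 ^ k) + γ := by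
        rw [map_sum]
        have he : ∀ i ∈ Finset.range k, φ (x ^ (2 ^ i)) = (γ ^ 2 + γ) ^ (2 ^ i) := by
          intro i _
          rw [map_pow, ← hX, hγX]
        rw [Finset.sum_congr rfl he, sumL]
      set A := γ ^ (2 ^ k) with hAdef
      have hA1 : γ ^ (c + 1) = A := by rw [hc1, hAdef]
      have hB1 : (γ + 1) ^ (c + 1) = A + 1 := by rw [hc1, hAdef]; exact hbp k
      -- main identity
      have hGoal : (w + w⁻¹) * (γ * (γ + 1)) ^ (c + 2) = (A + γ) ^ 2 := by
        have hac : γ ^ c ≠ 0 := pow_ne_zero _ ha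
        have hbc : (γ + 1) ^ c ≠ 0 := pow_ne_zero _ hb
        have e1 : w + w⁻¹ = (γ ^ c * γ ^ c + (γ + 1) ^ c * (γ + 1) ^ c) * (γ ^ c * (γ + 1) ^ c)⁻¹ := by
          rw [hwdef, hu, mul_pow, inv_pow, mul_inv, inv_inv, mul_inv]
          linear_combination (-(γ ^ c * ((γ + 1) ^ c)⁻¹)) * mul_inv_cancel₀ hac + (-((γ ^ c)⁻¹ * (γ + 1) ^ c)) * mul_inv_cancel₀ hbc
        have e2 : (γ * (γ + 1)) ^ (c + 2) = (γ ^ c * (γ + 1) ^ c) * (γ ^ 2 * (γ + 1) ^ 2) := by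
          rw [mul_pow, pow_add, pow_add]; ring
        rw [e1, e2]
        have e3 : (γ ^ c * γ ^ c + (γ + 1) ^ c * (γ + 1) ^ c) * (γ ^ c * (γ + 1) ^ c)⁻¹ *
            ((γ ^ c * (γ + 1) ^ c) * (γ ^ 2 * (γ + 1) ^ 2))
            = (γ ^ c * γ ^ c + (γ + 1) ^ c * (γ + 1) ^ c) * (γ ^ 2 * (γ + 1) ^ 2) := by
          rw [mul_assoc, inv_mul_cancel_left₀ (mul_ne_zero hac hbc)]
        rw [e3]
        have e4 : (γ ^ c * γ ^ c + (γ + 1) ^ c * (γ + 1) ^ c) * (γ ^ 2 * (γ + 1) ^ 2)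
            = (γ ^ (c + 1)) ^ 2 * (γ + 1) ^ 2 + ((γ + 1) ^ (c + 1)) ^ 2 * γ ^ 2 := by
          ring
        rw [e4, hA1, hB1]
        linear_combination (A ^ 2 * γ ^ 2 + A ^ 2 * γ + A * γ ^ 2 - A * γ) * h2K
      -- φ(f x)² = w + w⁻¹
      have hfx : φ (f x) = X ^ (2 ^ (m - 1) - 2 ^ (k - 1) - 1) * (A + γ) := by
        rw [hf, map_mul, map_pow, hL, ← hX, hAdef]
      have hpow1 : X ^ (2 ^ (m - 1) - 2 ^ (k - 1) - 1) * X ^ (2 ^ (m - 1) - 2 ^ (k - 1) - 1) *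
          X ^ (c + 2) = 1 := by
        rw [← pow_add, ← pow_add]
        have p1 : 2 ^ m = 2 * 2 ^ (m - 1) := by
          rw [← pow_succ']; congr 1; omega
        have p2 : 2 ^ k = 2 * 2 ^ (k - 1) := by
          rw [← pow_succ']; congr 1; omega
        have p3 : 2 ^ (k - 1) < 2 ^ (m - 1) :=
          Nat.pow_lt_pow_right (by norm_num) (by omega)
        have p4 : 1 ≤ 2 ^ k := Nat.one_le_two_pow
        have e : (2 ^ (m - 1) - 2 ^ (k - 1) - 1) + (2 ^ (m - 1) - 2 ^ (k - 1) - 1) + (c + 2)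
            = 2 ^ m - 1 := by
          rw [hcdef]; omega
        rw [e, hX1]
      have hfxsq : (φ (f x)) ^ 2 = w + w⁻¹ := by
        have hXc : X ^ (c + 2) ≠ 0 := pow_ne_zero _ hXne
        apply mul_right_cancel₀ hXc
        rw [hfx]
        calc (X ^ (2 ^ (m - 1) - 2 ^ (k - 1) - 1) * (A + γ)) ^ 2 * X ^ (c + 2)
            = (X ^ (2 ^ (m - 1) - 2 ^ (k - 1) - 1) * X ^ (2 ^ (m - 1) - 2 ^ (k - 1) - 1) *
              X ^ (c + 2)) * (A + γ) ^ 2 := by ring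
          _ = (A + γ) ^ 2 := by rw [hpow1, one_mul]
          _ = (w + w⁻¹) * (γ * (γ + 1)) ^ (c + 2) := hGoal.symm
          _ = (w + w⁻¹) * X ^ (c + 2) := by rw [← hXab]
      -- finish
      rw [map_pow, hfxsq, dickE_add_inv w hwne d, hwd, inv_pow, hwd]
      have hfin : (u + u⁻¹) * X = 1 := by
        rw [hu, hXab, mul_inv, inv_inv]
        linear_combination (γ ^ 2) * mul_inv_cancel₀ hb + ((γ + 1) ^ 2) * mul_inv_cancel₀ ha + (γ ^ 2 + γ) * h2K
      exact eq_inv_of_mul_eq_one_left hfin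
  -- assemble
  have hleft : Function.LeftInverse (fun y => (dicksonEval d (y ^ 2))⁻¹) f := by
    intro x
    simp only
    rw [key x, inv_inv]
  have hinj : Function.Injective f := hleft.injective
  have hbij : Function.Bijective f := (Finite.injective_iff_bijective).mp hinj
  refine ⟨hbij, ?_, fun x => by rw [key x, inv_inv]⟩
  intro x
  obtain ⟨y, rfl⟩ := hbij.surjective x
  rw [key y, inv_inv]
end

section
/- Let m and k be odd positive integers with k < m and gcd(k, m) = 1. Let e = 2^{m-1} - 2^{k-1} - 1, let L(z) = Σ_{i=0}^{k-1} z^{2^i}, and define the Dempwolff–Müller multiplication on F_{2^m} by a ⋄ x = a^e · L(a·x). Let d be a positive integer with d·(2^k - 1) ≡ 1 (mod 2^{2m} - 1). Then for every x ∈ F_{2^m} with x ≠ 0, the map a ↦ a ⋄ x is a bijection of F_{2^m}, and for every y ∈ F_{2^m} its unique preimage is a = (x · D_d(y^2 · (x^{2^k + 1})^{-1}))^{-1}; that is, ((x · D_d(y^2 · (x^{2^k+1})^{-1}))^{-1}) ⋄ x = y for all y ∈ F_{2^m}, and (x · D_d((a ⋄ x)^2 · (x^{2^k+1})^{-1}))^{-1}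 = a for all a ∈ F_{2^m}. -/
namespace DM

/-- Dickson coefficient. -/
def c (n i : ℕ) : ℕ := n * Nat.choose (n - i) i / (n - i)

lemma c_eq_zero {n i : ℕ} (h : n < 2 * i) : c n i = 0 := by
  have hc : Nat.choose (n - i) i = 0 := Nat.choose_eq_zero_of_lt (by omega)
  simp [c, hc]

lemma c_zero (n : ℕ) (hn : 0 < n) : c n 0 = 1 := by
  simp [c, Nat.div_self hn]

lemma c_diag (i : ℕ) (hi : 0 < i) : c (2 * i) i = 2 := by
  have h1 : 2 * i - i = i := by omega
  simp only [c, h1, Nat.choose_self, mul_one]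
  exact Nat.mul_div_cancel 2 hi

lemma c_formula {n i : ℕ} (hi : 1 ≤ i) (h : 2 * i ≤ n) :
    c n i = Nat.choose (n - i) i + Nat.choose (n - i - 1) (i - 1) := by
  have hni : 1 ≤ n - i := by omega
  have key : (n - i) * Nat.choose (n - i - 1) (i - 1) = Nat.choose (n - i) i * i := by
    have := Nat.add_one_mul_choose_eq (n - i - 1) (i - 1)
    have e1 : n - i - 1 + 1 = n - i := by omega
    have e2 : i - 1 + 1 = i := by omega
    rw [e1, e2] at this
    exact this
  have main : n * Nat.choose (n - i) i
      = (Nat.choose (n - i) i + Nat.choose (n - i - 1) (i - 1)) * (n - i) := by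
    have hn : n = (n - i) + i := by omega
    calc n * Nat.choose (n - i) i = ((n - i) + i) * Nat.choose (n - i) i := by rw [← hn]
      _ = (n - i) * Nat.choose (n - i) i + Nat.choose (n - i) i * i := by ring
      _ = (n - i) * Nat.choose (n - i) i + (n - i) * Nat.choose (n - i - 1) (i - 1) := by
          rw [key]
      _ = _ := by ring
  unfold c
  rw [main, Nat.mul_div_cancel _ (by omega)]

/-- The coefficient recurrence over ℕ, valid in the main range. -/
lemma c_rec_nat {n i : ℕ} (hi : 1 ≤ i) (h : 2 * i ≤ n + 1) :
    c (n + 2) i = c (n + 1) i + c n (i - 1) := by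
  rcases Nat.lt_or_ge i 2 with hi2 | hi2
  · -- i = 1
    have : i = 1 := by omega
    subst this
    have hn1 : 1 ≤ n := by omega
    rw [c_formula (le_refl 1) (by omega), c_formula (le_refl 1) (by omega), c_zero n hn1]
    simp only [Nat.add_sub_cancel, Nat.sub_self, Nat.choose_one_right, Nat.choose_zero_right]
    have e1 : n + 2 - 1 = n + 1 := by omega
    have e2 : n + 2 - 1 - 1 + 1 - 1 = n := by omega
    omega
  · obtain ⟨j, rfl⟩ : ∃ j, i = j + 2 := ⟨i - 2, by omega⟩
    obtain ⟨l, rfl⟩ : ∃ l, n = 2 * j + 3 + l := ⟨n - (2 * j + 3), by omega⟩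
    rw [c_formula (by omega) (by omega), c_formula (by omega) (by omega),
        c_formula (by omega) (by omega)]
    rw [show j + 2 - 1 = j + 1 by omega]
    rw [show j + 1 - 1 = j by omega]
    rw [show 2 * j + 3 + l + 2 - (j + 2) = j + 3 + l by omega]
    rw [show 2 * j + 3 + l + 1 - (j + 2) = j + 2 + l by omega]
    rw [show 2 * j + 3 + l - (j + 1) = j + 2 + l by omega]
    rw [show j + 3 + l - 1 = j + 2 + l by omega]
    rw [show j + 2 + l - 1 = j + 1 + l by omega]
    have p1 : Nat.choose (j + 3 + l) (j + 2) =
        Nat.choose (j + 2 + l) (j + 1) + Nat.choose (j + 2 + l) (j + 2) := by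
      rw [show j + 3 + l = (j + 2 + l) + 1 by omega, show j + 2 = (j + 1) + 1 by omega]
      exact Nat.choose_succ_succ _ _
    have p2 : Nat.choose (j + 2 + l) (j + 1) =
        Nat.choose (j + 1 + l) j + Nat.choose (j + 1 + l) (j + 1) := by
      rw [show j + 2 + l = (j + 1 + l) + 1 by omega, show j + 1 = j + 1 by rfl]
      exact Nat.choose_succ_succ _ _
    omega

variable {R : Type*} [CommRing R]

/-- Dickson evaluation, general version. -/
def dick (n : ℕ) (x : R) : R :=
  ∑ i ∈ Finset.range (n / 2 + 1), ((c n i : ℕ) : R) * x ^ (n - 2 * i)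

lemma c_rec (n i : ℕ) (hi : 1 ≤ i) [CharP R 2] :
    ((c (n + 2) i : ℕ) : R) = ((c (n + 1) i : ℕ) : R) + ((c n (i - 1) : ℕ) : R) := by
  rcases Nat.lt_trichotomy (2 * i) (n + 2) with h | h | h
  · rw [c_rec_nat hi (by omega)]; push_cast; ring
  · -- 2i = n+2: both sides are 2 = 0 or 0
    have h1 : c (n + 2) i = 2 := by
      rw [show n + 2 = 2 * i from h.symm]; exact c_diag i (by omega)
    have h2 : c (n + 1) i = 0 := c_eq_zero (by omega)
    have h3 : ((c n (i - 1) : ℕ) : R) = 0 := by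
      rcases Nat.eq_or_lt_of_le hi with h4 | h4
      · -- i = 1, n = 0
        have : i = 1 := h4.symm
        subst this
        have : n = 0 := by omega
        subst this
        simp [c]
      · have : c n (i - 1) = 2 := by
          rw [show n = 2 * (i - 1) by omega]; exact c_diag _ (by omega)
        rw [this]; exact_mod_cast CharTwo.two_eq_zero
    rw [h1, h2, h3]
    push_cast
    rw [add_zero]
    exact CharTwo.two_eq_zero
  · rw [c_eq_zero (by omega : n + 2 < 2 * i), c_eq_zero (by omega : n + 1 < 2 * i),
        c_eq_zero (by omega : n < 2 * (i - 1))]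
    simp

end DM
section DM2
namespace DM
variable {R : Type*} [CommRing R]

lemma dick_ext (n : ℕ) (x : R) {M : ℕ} (h : n / 2 + 1 ≤ M) :
    dick n x = ∑ i ∈ Finset.range M, ((c n i : ℕ) : R) * x ^ (n - 2 * i) := by
  unfold dick
  apply Finset.sum_subset (Finset.range_subset_range.2 h)
  intro i hiM hi
  rw [Finset.mem_range, not_lt] at hi
  rw [c_eq_zero (by omega : n < 2 * i)]
  simp

lemma dick_rec [CharP R 2] (n : ℕ) (x : R) :
    dick (n + 2) x = x * dick (n + 1) x + dick n x := by
  rw [dick_ext (n + 2) x (M := n + 4) (by omega),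
      dick_ext (n + 1) x (M := n + 4) (by omega),
      dick_ext n x (M := n + 3) (by omega)]
  have h3 : (∑ i ∈ Finset.range (n + 3), ((c n i : ℕ) : R) * x ^ (n - 2 * i))
      = ∑ i ∈ Finset.range (n + 4),
          (if i = 0 then 0 else ((c n (i - 1) : ℕ) : R) * x ^ (n + 2 - 2 * i)) := by
    rw [Finset.sum_range_succ' (fun i =>
      (if i = 0 then 0 else ((c n (i - 1) : ℕ) : R) * x ^ (n + 2 - 2 * i))) (n + 3)]
    rw [if_pos rfl, add_zero]
    apply Finset.sum_congr rfl
    intro i _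
    rw [if_neg (Nat.succ_ne_zero i), show i + 1 - 1 = i by omega,
      show n + 2 - 2 * (i + 1) = n - 2 * i by omega]
  rw [h3, Finset.mul_sum, ← Finset.sum_add_distrib]
  apply Finset.sum_congr rfl
  intro i _
  by_cases h0 : i = 0
  · subst h0
    rw [if_pos rfl, add_zero, c_zero _ (by omega), c_zero _ (by omega)]
    simp only [Nat.cast_one, one_mul, Nat.mul_zero, Nat.sub_zero]
    rw [← pow_succ']
  · rw [if_neg h0]
    have hrec := c_rec (R := R) n i (by omega)
    by_cases h2 : 2 * i ≤ n + 1
    · have hx : x * x ^ (n + 1 - 2 * i) = x ^ (n + 2 - 2 * i) := by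
        rw [← pow_succ']
        congr 1
        omega
      rw [hrec, add_mul, ← hx]
      ring
    · have hz : c (n + 1) i = 0 := c_eq_zero (by omega)
      rw [hrec, hz]
      push_cast
      ring

lemma dick_at_zero [CharP R 2] {d : ℕ} (hd : 0 < d) : dick d (0 : R) = 0 := by
  unfold dick
  apply Finset.sum_eq_zero
  intro i hi
  rw [Finset.mem_range] at hi
  rcases Nat.lt_or_ge (2 * i) d with h | h
  · rw [zero_pow (by omega : d - 2 * i ≠ 0), mul_zero]
  · have hdi : d = 2 * i := by omega
    have hi0 : 0 < i := by omega
    rw [hdi, c_diag i hi0]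
    simp [CharTwo.two_eq_zero]

lemma dick_add_inv {K : Type*} [Field K] [CharP K 2] (v : K) (hv : v ≠ 0) (n : ℕ) :
    dick n (v + v⁻¹) = v ^ n + (v⁻¹) ^ n := by
  have htwo : (2 : K) = 0 := CharTwo.two_eq_zero
  have hw : v * v⁻¹ = 1 := mul_inv_cancel₀ hv
  induction n using Nat.strong_induction_on with
  | _ n ih =>
    match n with
    | 0 => simp [dick, c]; rw [← htwo]; norm_num
    | 1 => simp [dick, c]
    | (n + 2) =>
      rw [dick_rec, ih (n + 1) (by omega), ih n (by omega)]
      linear_combination (v ^ n + (v⁻¹) ^ n) * hw + (v ^ n + (v⁻¹) ^ n) * htwo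

lemma map_dick {S : Type*} [CommRing S] (f : R →+* S) (n : ℕ) (x : R) :
    f (dick n x) = dick n (f x) := by
  unfold dick
  rw [map_sum]
  apply Finset.sum_congr rfl
  intro i _
  rw [map_mul, map_natCast, map_pow]

end DM
end DM2
section DM3
namespace DM

lemma main_inv (m k d : ℕ) (hm : m ≠ 0)
    (hd : d * (2 ^ k - 1) ≡ 1 [MOD 2 ^ (2 * m) - 1])
    (t : GaloisField 2 m) (ht : t ≠ 0) :
    dick d ((∑ i ∈ Finset.range k, t ^ (2 ^ i)) ^ 2 * (t ^ (2 ^ k + 1))⁻¹) = t⁻¹ := by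
  classical
  haveI instF : Fintype (GaloisField 2 m) := Fintype.ofFinite _
  have hcard : Fintype.card (GaloisField 2 m) = 2 ^ m := by
    have h := GaloisField.card 2 m hm
    rwa [Nat.card_eq_fintype_card] at h
  let φ : GaloisField 2 m →+* AlgebraicClosure (GaloisField 2 m) :=
    algebraMap (GaloisField 2 m) (AlgebraicClosure (GaloisField 2 m))
  have hφ : Function.Injective φ := φ.injective
  have ht' : φ t ≠ 0 := fun h => ht (hφ (by rwa [map_zero]))
  have htwo : (2 : AlgebraicClosure (GaloisField 2 m)) = 0 := CharTwo.two_eq_zero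
  obtain ⟨s, hsroot⟩ : ∃ s : AlgebraicClosure (GaloisField 2 m),
      φ t * s ^ 2 + s + φ t = 0 := by
    obtain ⟨s, hs⟩ := IsAlgClosed.exists_root
      (Polynomial.C (φ t) * Polynomial.X ^ 2 + Polynomial.C 1 * Polynomial.X
        + Polynomial.C (φ t))
      (by rw [Polynomial.degree_quadratic ht']; norm_num)
    refine ⟨s, ?_⟩
    have h2 := hs
    simp only [Polynomial.IsRoot, Polynomial.eval_add, Polynomial.eval_mul,
      Polynomial.eval_pow, Polynomial.eval_C, Polynomial.eval_X, one_mul] at h2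
    exact h2
  have hs0 : s ≠ 0 := by
    intro h
    apply ht'
    rw [h] at hsroot
    simpa using hsroot
  have hs1 : s ≠ 1 := by
    intro h
    rw [h] at hsroot
    have h1 : (1 : AlgebraicClosure (GaloisField 2 m)) = 0 := by
      linear_combination hsroot - φ t * htwo
    exact one_ne_zero h1
  have htpow : φ t ^ (2 ^ m) = φ t := by
    rw [← map_pow]
    congr 1
    have h2 := FiniteField.pow_card t
    rwa [hcard] at h2
  set u := s ^ (2 ^ m) with hu
  have hroot2 : φ t * u ^ 2 + u + φ t = 0 := by
    have h : (φ t * s ^ 2 + s + φ t) ^ (2 ^ m) = 0 := by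
      rw [hsroot]
      exact zero_pow (by positivity)
    rw [add_pow_char_pow, add_pow_char_pow, mul_pow, htpow,
      pow_right_comm s 2 (2 ^ m)] at h
    exact h
  have hfact : (s + u) * (φ t * (s + u) + 1) = 0 := by
    linear_combination hsroot + hroot2 + (φ t * s * u - φ t) * htwo
  have hcase : u = s ∨ u * s = 1 := by
    rcases mul_eq_zero.mp hfact with h | h
    · left
      linear_combination h - s * htwo
    · right
      have h1 : φ t * (u * s) = φ t * 1 := by linear_combination s * h - hsroot
      exact mul_left_cancel₀ ht' h1
  have hs2m : s ^ (2 ^ (2 * m)) = s := by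
    have hpow : s ^ (2 ^ (2 * m)) = u ^ (2 ^ m) := by
      rw [hu, ← pow_mul]
      congr 1
      rw [two_mul, pow_add]
    rcases hcase with h | h
    · rw [hpow, h, ← hu]
      exact h
    · have hus : u = s⁻¹ := eq_inv_of_mul_eq_one_left h
      rw [hpow, hus, inv_pow, ← hu, hus, inv_inv]
  have hs2m1 : s ^ (2 ^ (2 * m) - 1) = 1 := by
    have hpos : 0 < 2 ^ (2 * m) := by positivity
    have h1 : s ^ (2 ^ (2 * m) - 1) * s = 1 * s := by
      rw [← pow_succ, show 2 ^ (2 * m) - 1 + 1 = 2 ^ (2 * m) by omega, hs2m, one_mul]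
    exact mul_right_cancel₀ hs0 h1
  have hsd : s ^ (d * (2 ^ k - 1)) = s := by
    have h4 : (4 : ℕ) ≤ 2 ^ (2 * m) := by
      calc (4 : ℕ) = 2 ^ 2 := by norm_num
        _ ≤ 2 ^ (2 * m) := Nat.pow_le_pow_right (by norm_num) (by omega)
    have hmod : d * (2 ^ k - 1) % (2 ^ (2 * m) - 1) = 1 := by
      have h1m : (1 : ℕ) % (2 ^ (2 * m) - 1) = 1 := Nat.mod_eq_of_lt (by omega)
      have := hd
      unfold Nat.ModEq at this
      rw [h1m] at this
      exact this
    obtain ⟨q, hq⟩ : ∃ q, d * (2 ^ k - 1) = (2 ^ (2 * m) - 1) * q + 1 := by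
      refine ⟨d * (2 ^ k - 1) / (2 ^ (2 * m) - 1), ?_⟩
      conv_lhs => rw [← Nat.div_add_mod (d * (2 ^ k - 1)) (2 ^ (2 * m) - 1)]
      rw [hmod]
    rw [hq, pow_add, pow_mul, hs2m1, one_pow, one_mul, pow_one]
  set w := s + 1 with hwdef
  have hw0 : w ≠ 0 := by
    intro h
    apply hs1
    linear_combination h - htwo + hwdef
  set u' := w⁻¹ with hu'def
  have hu'w : u' * w = 1 := inv_mul_cancel₀ hw0
  have htws : φ t * w ^ 2 = s := by
    linear_combination hsroot + (φ t * s - s) * htwo + (2 * φ t * s + φ t * w + φ t) * hwdef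
  have ht'u : φ t = u' + u' ^ 2 := by
    have h2 : (u' + u' ^ 2) * w ^ 2 = s := by
      linear_combination (w + u' * w + 1) * hu'w + hwdef + htwo
    exact (mul_right_cancel₀ (pow_ne_zero 2 hw0) (htws.trans h2.symm))
  have hterm : ∀ i : ℕ, (φ t) ^ (2 ^ i) = u' ^ (2 ^ (i + 1)) - u' ^ (2 ^ i) := by
    intro i
    rw [CharTwo.sub_eq_add, ht'u, add_pow_char_pow,
      show (u' ^ 2) ^ (2 ^ i) = u' ^ (2 ^ (i + 1)) by rw [← pow_mul, ← pow_succ'], add_comm]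
  have hLsum : (∑ i ∈ Finset.range k, (φ t) ^ (2 ^ i)) = u' ^ (2 ^ k) + u' := by
    calc (∑ i ∈ Finset.range k, (φ t) ^ (2 ^ i))
        = ∑ i ∈ Finset.range k, (u' ^ (2 ^ (i + 1)) - u' ^ (2 ^ i)) :=
          Finset.sum_congr rfl (fun i _ => hterm i)
      _ = u' ^ (2 ^ k) - u' ^ (2 ^ 0) := Finset.sum_range_sub (fun i => u' ^ (2 ^ i)) k
      _ = u' ^ (2 ^ k) + u' := by rw [CharTwo.sub_eq_add, pow_zero, pow_one]
  have hwk : w ^ (2 ^ k) = s ^ (2 ^ k) + 1 := by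
    rw [hwdef, add_pow_char_pow, one_pow]
  have hu'k : u' ^ (2 ^ k) * w ^ (2 ^ k) = 1 := by rw [← mul_pow, hu'w, one_pow]
  have hSw : (u' ^ (2 ^ k) + u') * w ^ (2 ^ k + 1) = s ^ (2 ^ k) + s := by
    rw [pow_add, pow_one]
    linear_combination w * hu'k + w ^ (2 ^ k) * hu'w + hwk + hwdef + htwo
  set S := ∑ i ∈ Finset.range k, (φ t) ^ (2 ^ i) with hSdef
  have htk : (φ t) ^ (2 ^ k + 1) * (w ^ 2) ^ (2 ^ k + 1) = s ^ (2 ^ k + 1) := by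
    rw [← mul_pow, htws]
  have htk0 : (φ t) ^ (2 ^ k + 1) ≠ 0 := pow_ne_zero _ ht'
  have hsk0 : s ^ (2 ^ k + 1) ≠ 0 := pow_ne_zero _ hs0
  have hX : S ^ 2 * ((φ t) ^ (2 ^ k + 1))⁻¹ * s ^ (2 ^ k + 1) = (s ^ (2 ^ k) + s) ^ 2 := by
    rw [← htk]
    calc S ^ 2 * ((φ t) ^ (2 ^ k + 1))⁻¹ * ((φ t) ^ (2 ^ k + 1) * (w ^ 2) ^ (2 ^ k + 1))
        = S ^ 2 * (w ^ 2) ^ (2 ^ k + 1) * (((φ t) ^ (2 ^ k + 1))⁻¹ * (φ t) ^ (2 ^ k + 1)) := by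
          ring
      _ = S ^ 2 * (w ^ 2) ^ (2 ^ k + 1) := by rw [inv_mul_cancel₀ htk0, mul_one]
      _ = (S * w ^ (2 ^ k + 1)) ^ 2 := by rw [mul_pow, pow_right_comm w 2 (2 ^ k + 1)]
      _ = (s ^ (2 ^ k) + s) ^ 2 := by rw [hLsum, hSw]
  have h2k1 : 1 ≤ 2 ^ k := Nat.one_le_two_pow
  have hv1 : s ^ (2 ^ k - 1) * s ^ 2 = s ^ (2 ^ k + 1) := by
    rw [← pow_add]
    congr 1
    omega
  have hv2 : s ^ (2 ^ k - 1) * s ^ (2 ^ k + 1) = (s ^ (2 ^ k)) ^ 2 := by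
    rw [← pow_add, ← pow_mul]
    congr 1
    omega
  set v := s ^ (2 ^ k - 1) with hvdef
  have hv0 : v ≠ 0 := pow_ne_zero _ hs0
  have hY : (v + v⁻¹) * s ^ (2 ^ k + 1) = (s ^ (2 ^ k) + s) ^ 2 := by
    have hvinv : v⁻¹ * s ^ (2 ^ k + 1) = s ^ 2 := by
      rw [← hv1, ← mul_assoc, inv_mul_cancel₀ hv0, one_mul]
    rw [add_mul, hvinv, hv2]
    linear_combination (-(s ^ (2 ^ k) * s)) * htwo
  have harg : S ^ 2 * ((φ t) ^ (2 ^ k + 1))⁻¹ = v + v⁻¹ :=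
    mul_right_cancel₀ hsk0 (hX.trans hY.symm)
  have hvd : v ^ d = s := by
    rw [hvdef, ← pow_mul, mul_comm, hsd]
  have hdick : dick d (S ^ 2 * ((φ t) ^ (2 ^ k + 1))⁻¹) = s + s⁻¹ := by
    rw [harg, dick_add_inv v hv0 d, hvd, inv_pow, hvd]
  have hsinv : s⁻¹ * s = 1 := inv_mul_cancel₀ hs0
  have hfin : (s + s⁻¹) * φ t = 1 := by
    have h1 : ((s + s⁻¹) * φ t) * s = 1 * s := by
      linear_combination φ t * hsinv + hsroot - s * htwo
    exact mul_right_cancel₀ hs0 h1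
  have hmapS : φ (∑ i ∈ Finset.range k, t ^ (2 ^ i)) = S := by
    rw [hSdef, map_sum]
    exact Finset.sum_congr rfl (fun i _ => map_pow φ t (2 ^ i))
  apply hφ
  calc φ (dick d ((∑ i ∈ Finset.range k, t ^ (2 ^ i)) ^ 2 * (t ^ (2 ^ k + 1))⁻¹))
      = dick d (S ^ 2 * ((φ t) ^ (2 ^ k + 1))⁻¹) := by
        rw [map_dick, map_mul, map_pow, map_inv₀, map_pow, hmapS]
    _ = s + s⁻¹ := hdick
    _ = (φ t)⁻¹ := eq_inv_of_mul_eq_one_left hfin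
    _ = φ t⁻¹ := (map_inv₀ φ t).symm

end DM
end DM3
section DM4
namespace DM

lemma key (m k d : ℕ) (hmpos : 0 < m) (hkpos : 0 < k)
    (hkm : k < m) (hdpos : 0 < d) (hd : d * (2 ^ k - 1) ≡ 1 [MOD 2 ^ (2 * m) - 1])
    (x a : GaloisField 2 m) (hx : x ≠ 0) :
    (x * dick d ((a ^ (2 ^ (m - 1) - 2 ^ (k - 1) - 1) *
        ∑ i ∈ Finset.range k, (a * x) ^ (2 ^ i)) ^ 2 * (x ^ (2 ^ k + 1))⁻¹))⁻¹ = a := by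
  by_cases ha : a = 0
  · subst ha
    have hS : (∑ i ∈ Finset.range k, ((0 : GaloisField 2 m) * x) ^ (2 ^ i)) = 0 := by
      apply Finset.sum_eq_zero
      intro i _
      rw [zero_mul, zero_pow (by positivity)]
    rw [hS, mul_zero, zero_pow two_ne_zero, zero_mul, dick_at_zero hdpos, mul_zero, inv_zero]
  · haveI instF : Fintype (GaloisField 2 m) := Fintype.ofFinite _
    have hcard : Fintype.card (GaloisField 2 m) = 2 ^ m := by
      have h := GaloisField.card 2 m (by omega)
      rwa [Nat.card_eq_fintype_card] at h
    have h2k : 2 ^ k = 2 * 2 ^ (k - 1) := by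
      rw [← pow_succ']
      congr 1
      omega
    have h2m : 2 ^ m = 2 * 2 ^ (m - 1) := by
      rw [← pow_succ']
      congr 1
      omega
    have hlt : 2 ^ (k - 1) < 2 ^ (m - 1) := Nat.pow_lt_pow_right (by norm_num) (by omega)
    have he : 2 * (2 ^ (m - 1) - 2 ^ (k - 1) - 1) + (2 ^ k + 1) = 2 ^ m - 1 := by omega
    have hae : a ^ (2 * (2 ^ (m - 1) - 2 ^ (k - 1) - 1)) * a ^ (2 ^ k + 1) = 1 := by
      rw [← pow_add, he]
      have h1 := FiniteField.pow_card_sub_one_eq_one a ha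
      rwa [hcard] at h1
    set t := a * x with htdef
    have ht : t ≠ 0 := mul_ne_zero ha hx
    set e := 2 ^ (m - 1) - 2 ^ (k - 1) - 1 with hedef
    set S := ∑ i ∈ Finset.range k, t ^ (2 ^ i) with hSdef
    have hkey : (a ^ e * S) ^ 2 * (x ^ (2 ^ k + 1))⁻¹ = S ^ 2 * (t ^ (2 ^ k + 1))⁻¹ := by
      have h1 : (a ^ e * S) ^ 2 = a ^ (2 * e) * S ^ 2 := by
        rw [mul_pow, ← pow_mul, mul_comm e 2]
      have h2 : t ^ (2 ^ k + 1) = a ^ (2 ^ k + 1) * x ^ (2 ^ k + 1) := mul_pow a x _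
      have h3 : a ^ (2 * e) = (a ^ (2 ^ k + 1))⁻¹ := eq_inv_of_mul_eq_one_left hae
      rw [h1, h2, mul_inv, h3]
      ring
    rw [hkey, hSdef, main_inv m k d (by omega) hd t ht, htdef, mul_inv_rev, inv_inv,
      mul_assoc, mul_inv_cancel₀ hx, mul_one]

end DM
end DM4

theorem stmt1 (m k : ℕ) (hmpos : 0 < m) (hkpos : 0 < k) (hm : Odd m) (hk : Odd k)
    (hkm : k < m) (hgcd : Nat.gcd k m = 1)
    (d : ℕ) (hdpos : 0 < d) (hd : d * (2 ^ k - 1) ≡ 1 [MOD 2 ^ (2 * m) - 1])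
    (dia : GaloisField 2 m → GaloisField 2 m → GaloisField 2 m)
    (hdia : ∀ a x, dia a x =
      a ^ (2 ^ (m - 1) - 2 ^ (k - 1) - 1) * ∑ i ∈ Finset.range k, (a * x) ^ (2 ^ i)) :
    ∀ x : GaloisField 2 m, x ≠ 0 →
      Function.Bijective (fun a => dia a x) ∧
      (∀ y, dia ((x * dicksonEval d (y ^ 2 * (x ^ (2 ^ k + 1))⁻¹))⁻¹) x = y) ∧
      (∀ a, (x * dicksonEval d ((dia a x) ^ 2 * (x ^ (2 ^ k + 1))⁻¹))⁻¹ = a) := by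
  intro x hx
  have hde : ∀ z : GaloisField 2 m, dicksonEval d z = DM.dick d z := fun z => rfl
  have h3 : ∀ a, (x * dicksonEval d ((dia a x) ^ 2 * (x ^ (2 ^ k + 1))⁻¹))⁻¹ = a := by
    intro a
    rw [hdia a x, hde]
    exact DM.key m k d hmpos hkpos hkm hdpos hd x a hx
  have hinj : Function.Injective (fun a => dia a x) := by
    intro a b hab
    simp only at hab
    have h := congrArg (fun y => (x * dicksonEval d (y ^ 2 * (x ^ (2 ^ k + 1))⁻¹))⁻¹) hab
    change (x * dicksonEval d ((dia a x) ^ 2 * (x ^ (2 ^ k + 1))⁻¹))⁻¹ =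
      (x * dicksonEval d ((dia b x) ^ 2 * (x ^ (2 ^ k + 1))⁻¹))⁻¹ at h
    rw [h3 a, h3 b] at h
    exact h
  have hbij : Function.Bijective (fun a => dia a x) := Finite.injective_iff_bijective.mp hinj
  refine ⟨hbij, ?_, h3⟩
  intro y
  obtain ⟨a, ha⟩ := hbij.2 y
  have ha' : dia a x = y := ha
  rw [← ha', h3 a]
end

section
/- Let m and k be odd positive integers with k < m and gcd(k, m) = 1, let d be a positive integer with d·(2^k - 1) ≡ 1 (mod 2^{2m} - 1), and let g : F_{2^m} → F_2 be balanced with g(0) = 0. Define f : F_{2^m} × F_{2^m} → F_2 by f(x, y) = g((x · D_d(y^2 · (x^{2^k+1})^{-1}))^{-1}) (by the convention 0^{-1} = 0, for x = 0 the argument of g is 0, so f(0, y) = 0). Then f is bent. -/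
noncomputable instance (m : ℕ) : Fintype (GaloisField 2 m) := Fintype.ofFinite _

noncomputable def trF {m : ℕ} (x : GaloisField 2 m) : GaloisField 2 m :=
  ∑ i ∈ Finset.range m, x ^ (2 ^ i)

noncomputable def tr2 {m : ℕ} (x : GaloisField 2 m) : ZMod 2 :=
  open scoped Classical in
  if trF x = 1 then 1 else 0

open Finset Polynomial

/-- Dickson coefficient -/
private def A (n i : ℕ) : ℕ := n * Nat.choose (n - i) i / (n - i)

private lemma A_zero {n : ℕ} (hn : 0 < n) : A n 0 = 1 := by
  simp only [A, Nat.sub_zero, Nat.choose_zero_right, mul_one]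
  exact Nat.div_self hn

private lemma A_eq (n i : ℕ) (h1 : 1 ≤ i) (h2 : i + 1 ≤ n) :
    A n i = Nat.choose (n - i) i + Nat.choose (n - i - 1) (i - 1) := by
  have hni : 1 ≤ n - i := by omega
  have key : i * Nat.choose (n - i) i = (n - i) * Nat.choose (n - i - 1) (i - 1) := by
    have h := Nat.add_one_mul_choose_eq (n - i - 1) (i - 1)
    have e1 : n - i - 1 + 1 = n - i := by omega
    have e2 : i - 1 + 1 = i := by omega
    rw [e1, e2] at h
    rw [h, Nat.mul_comm]
  have main : n * Nat.choose (n - i) i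
      = (n - i) * (Nat.choose (n - i) i + Nat.choose (n - i - 1) (i - 1)) := by
    have hn : n = (n - i) + i := by omega
    calc n * Nat.choose (n - i) i
        = (n - i) * Nat.choose (n - i) i + i * Nat.choose (n - i) i := by
          rw [← add_mul, ← hn]
      _ = (n - i) * (Nat.choose (n - i) i + Nat.choose (n - i - 1) (i - 1)) := by
          rw [key, mul_add]
  rw [A, main, Nat.mul_div_cancel_left _ (by omega : 0 < n - i)]

private lemma A_rec (n j : ℕ) (hn : 1 ≤ n) (hj : j ≤ n / 2) :
    A (n + 2) (j + 1) = A (n + 1) (j + 1) + A n j := by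
  have h2 : 2 * j ≤ n := by omega
  rcases Nat.eq_zero_or_pos j with hj0 | hj1
  · subst hj0
    have e1 : A (n + 2) 1 = n + 2 := by
      rw [A_eq (n + 2) 1 le_rfl (by omega)]
      have : n + 2 - 1 = n + 1 := by omega
      rw [this, Nat.choose_one_right]
      have : n + 1 - 1 = n := by omega
      rw [this, Nat.choose_zero_right]
    have e2 : A (n + 1) 1 = n + 1 := by
      rw [A_eq (n + 1) 1 le_rfl (by omega)]
      have : n + 1 - 1 = n := by omega
      rw [this, Nat.choose_one_right]
      have : n - 1 + 1 = n := by omega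
      rw [Nat.choose_zero_right]
    rw [e1, e2, A_zero hn]
  · -- j ≥ 1, so n ≥ 2
    set a := n - 1 - j with ha
    have hn2 : 2 ≤ n := by omega
    have r1 : A (n + 2) (j + 1) = Nat.choose (a + 2) (j + 1) + Nat.choose (a + 1) j := by
      rw [A_eq (n + 2) (j + 1) (by omega) (by omega)]
      congr 2 <;> omega
    have r2 : A (n + 1) (j + 1) = Nat.choose (a + 1) (j + 1) + Nat.choose a j := by
      rw [A_eq (n + 1) (j + 1) (by omega) (by omega)]
      congr 2 <;> omega
    have r3 : A n j = Nat.choose (a + 1) j + Nat.choose a (j - 1) := by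
      rw [A_eq n j hj1 (by omega)]
      congr 2 <;> omega
    have p1 : Nat.choose (a + 2) (j + 1) = Nat.choose (a + 1) j + Nat.choose (a + 1) (j + 1) :=
      Nat.choose_succ_succ (a + 1) j
    have p2 : Nat.choose (a + 1) j = Nat.choose a (j - 1) + Nat.choose a j := by
      have : j = (j - 1) + 1 := by omega
      rw [this, Nat.choose_succ_succ]
      congr 2 <;> omega
    rw [r1, r2, r3, p1]
    omega

private lemma A_top_zero {n : ℕ} (hne : n % 2 = 0) : A (n + 1) (n / 2 + 1) = 0 := by
  have h : n + 1 - (n / 2 + 1) = n / 2 := by omega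
  rw [A, h, Nat.choose_eq_zero_of_lt (by omega), mul_zero, Nat.zero_div]

private lemma A_rec_cast {R : Type*} [CommRing R] [CharP R 2] (n j : ℕ) (hj : j ≤ n / 2) :
    ((A (n + 2) (j + 1) : ℕ) : R) = (A (n + 1) (j + 1) : R) + (A n j : R) := by
  rcases Nat.eq_zero_or_pos n with h0 | h1
  · subst h0
    have hj0 : j = 0 := by omega
    subst hj0
    have e1 : A 2 1 = 2 := by decide
    have e2 : A 1 1 = 0 := by decide
    have e3 : A 0 0 = 0 := by decide
    rw [e1, e2, e3]
    push_cast
    rw [CharTwo.two_eq_zero]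
    ring
  · exact_mod_cast congrArg (Nat.cast : ℕ → R) (A_rec n j h1 hj)

private lemma dickson_eval_eq_sum {R : Type*} [CommRing R] [CharP R 2] :
    ∀ (d : ℕ) (x : R), (Polynomial.dickson 1 1 d).eval x
      = ∑ i ∈ Finset.range (d / 2 + 1), (A d i : R) * x ^ (d - 2 * i)
  | 0, x => by
      rw [Polynomial.dickson_zero]
      have : A 0 0 = 0 := by decide
      simp [this]
      norm_num
      exact CharTwo.two_eq_zero
  | 1, x => by
      rw [Polynomial.dickson_one]
      have : A 1 0 = 1 := by decide
      simp [this]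
  | (n + 2), x => by
      rw [Polynomial.dickson_add_two, Polynomial.eval_sub, Polynomial.eval_mul,
        Polynomial.eval_mul, Polynomial.eval_X, Polynomial.eval_C, CharTwo.sub_eq_add,
        dickson_eval_eq_sum (n + 1) x, dickson_eval_eq_sum n x]
      have hr : (n + 2) / 2 + 1 = n / 2 + 2 := by omega
      rw [hr, one_mul]
      have hL1 : x * ∑ i ∈ Finset.range ((n + 1) / 2 + 1), (A (n + 1) i : R) * x ^ (n + 1 - 2 * i)
          = ∑ i ∈ Finset.range (n / 2 + 2), (A (n + 1) i : R) * x ^ (n + 2 - 2 * i) := by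
        rw [Finset.mul_sum]
        have hterm : ∀ i ∈ Finset.range ((n + 1) / 2 + 1),
            x * ((A (n + 1) i : R) * x ^ (n + 1 - 2 * i))
              = (A (n + 1) i : R) * x ^ (n + 2 - 2 * i) := by
          intro i hi
          have hi' : 2 * i ≤ n + 1 := by
            have := Finset.mem_range.mp hi; omega
          have he : n + 2 - 2 * i = (n + 1 - 2 * i) + 1 := by omega
          rw [he, pow_succ]
          ring
        rcases Nat.even_or_odd n with he | ho
        · have hmod : n % 2 = 0 := Nat.even_iff.mp he
          have h1 : (n + 1) / 2 + 1 = n / 2 + 1 := by omega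
          rw [h1] at hterm ⊢
          rw [Finset.sum_range_succ (fun i => (A (n + 1) i : R) * x ^ (n + 2 - 2 * i)) (n / 2 + 1)]
          rw [A_top_zero hmod, Nat.cast_zero, zero_mul, add_zero]
          exact Finset.sum_congr rfl hterm
        · have hmod : n % 2 = 1 := Nat.odd_iff.mp ho
          have h1 : (n + 1) / 2 + 1 = n / 2 + 2 := by omega
          rw [h1] at hterm ⊢
          exact Finset.sum_congr rfl hterm
      rw [hL1,
        Finset.sum_range_succ' (fun i => (A (n + 2) i : R) * x ^ (n + 2 - 2 * i)) (n / 2 + 1),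
        Finset.sum_range_succ' (fun i => (A (n + 1) i : R) * x ^ (n + 2 - 2 * i)) (n / 2 + 1)]
      have key : (∑ j ∈ Finset.range (n / 2 + 1), (A (n + 1) (j + 1) : R) * x ^ (n + 2 - 2 * (j + 1)))
          + ∑ j ∈ Finset.range (n / 2 + 1), (A n j : R) * x ^ (n - 2 * j)
          = ∑ j ∈ Finset.range (n / 2 + 1), (A (n + 2) (j + 1) : R) * x ^ (n + 2 - 2 * (j + 1)) := by
        rw [← Finset.sum_add_distrib]
        apply Finset.sum_congr rfl
        intro j hj
        have hj' : j ≤ n / 2 := by have := Finset.mem_range.mp hj; omega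
        have he : n - 2 * j = n + 2 - 2 * (j + 1) := by omega
        rw [he, A_rec_cast n j hj', add_mul]
      have hA0 : ((A (n + 2) 0 : ℕ) : R) = 1 := by rw [A_zero (by omega)]; norm_num
      have hA0' : ((A (n + 1) 0 : ℕ) : R) = 1 := by rw [A_zero (by omega)]; norm_num
      simp only [hA0, hA0', Nat.sub_zero, Nat.mul_zero]
      linear_combination key

private lemma dsum_add_inv {K : Type*} [Field K] [CharP K 2] (d : ℕ) (z : K) (hz : z ≠ 0) :
    ∑ i ∈ Finset.range (d / 2 + 1),
        ((d * Nat.choose (d - i) i / (d - i) : ℕ) : K) * (z + z⁻¹) ^ (d - 2 * i)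
      = z ^ d + z⁻¹ ^ d := by
  have h := Polynomial.dickson_one_one_eval_add_inv z z⁻¹ (mul_inv_cancel₀ hz) d
  rw [dickson_eval_eq_sum d (z + z⁻¹)] at h
  simpa [A] using h

private lemma Rsum_param {K : Type*} [Field K] [CharP K 2] (k : ℕ) (z : K) (hz : z ≠ 0) :
    ∑ i ∈ Finset.range k, (z + z⁻¹) ^ (2 ^ k + 1 - 2 ^ (i + 1))
      = z ^ (2 ^ k - 1) + z⁻¹ ^ (2 ^ k - 1) := by
  induction k with
  | zero => simp [CharTwo.add_self_eq_zero]
  | succ k ih =>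
    rw [Finset.sum_range_succ]
    have hsplit : ∀ i ∈ Finset.range k,
        (z + z⁻¹) ^ (2 ^ (k + 1) + 1 - 2 ^ (i + 1))
          = (z + z⁻¹) ^ (2 ^ k) * (z + z⁻¹) ^ (2 ^ k + 1 - 2 ^ (i + 1)) := by
      intro i hi
      have hik : i < k := Finset.mem_range.mp hi
      have h2 : 2 ^ (i + 1) ≤ 2 ^ k := Nat.pow_le_pow_right (by norm_num) (by omega)
      rw [← pow_add]
      congr 1
      have hkk : (2:ℕ) ^ (k + 1) = 2 ^ k * 2 := pow_succ 2 k
      rw [hkk]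
      omega
    rw [Finset.sum_congr rfl hsplit, ← Finset.mul_sum, ih]
    have htop : 2 ^ (k + 1) + 1 - 2 ^ (k + 1) = 1 := by omega
    rw [htop, pow_one]
    have hfr : (z + z⁻¹) ^ (2 ^ k) = z ^ (2 ^ k) + z⁻¹ ^ (2 ^ k) := by
      have := add_pow_char_pow z z⁻¹ 2 k (hp := ⟨Nat.prime_two⟩)
      exact this
    rw [hfr]
    set a := z ^ (2 ^ k - 1) with ha
    set b := z⁻¹ ^ (2 ^ k - 1) with hb
    have hz1 : z * z⁻¹ = 1 := mul_inv_cancel₀ hz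
    have hab : a * b = 1 := by
      rw [ha, hb, ← mul_pow, hz1, one_pow]
    have hza : z ^ (2 ^ k) = a * z := by
      rw [ha, ← pow_succ]
      congr 1
      have : 1 ≤ 2 ^ k := Nat.one_le_two_pow
      omega
    have hzb : z⁻¹ ^ (2 ^ k) = b * z⁻¹ := by
      rw [hb, ← pow_succ]
      congr 1
      have : 1 ≤ 2 ^ k := Nat.one_le_two_pow
      omega
    have haa : a * a * z = z ^ (2 ^ (k + 1) - 1) := by
      rw [ha, ← pow_add, ← pow_succ]
      congr 1
      have : 1 ≤ 2 ^ k := Nat.one_le_two_pow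
      have : 2 ^ (k + 1) = 2 ^ k + 2 ^ k := by rw [pow_succ]; omega
      omega
    have hbb : b * b * z⁻¹ = z⁻¹ ^ (2 ^ (k + 1) - 1) := by
      rw [hb, ← pow_add, ← pow_succ]
      congr 1
      have : 1 ≤ 2 ^ k := Nat.one_le_two_pow
      have : 2 ^ (k + 1) = 2 ^ k + 2 ^ k := by rw [pow_succ]; omega
      omega
    rw [hza, hzb]
    have expand : (a * z + b * z⁻¹) * (a + b) + (z + z⁻¹)
        = a * a * z + b * b * z⁻¹ + (a * b + 1) * (z + z⁻¹) := by ring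
    calc (a * z + b * z⁻¹) * (a + b) + (z + z⁻¹)
        = a * a * z + b * b * z⁻¹ + (a * b + 1) * (z + z⁻¹) := expand
      _ = z ^ (2 ^ (k + 1) - 1) + z⁻¹ ^ (2 ^ (k + 1) - 1) := by
          rw [hab, haa, hbb, CharTwo.add_self_eq_zero, zero_mul, add_zero]

set_option maxHeartbeats 1000000 in
private lemma exists_unit_param (m : ℕ) (hm : m ≠ 0) (s : GaloisField 2 m) :
    ∃ z : AlgebraicClosure (GaloisField 2 m), z ≠ 0 ∧
      z + z⁻¹ = algebraMap (GaloisField 2 m) (AlgebraicClosure (GaloisField 2 m)) s ∧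
      z ^ (2 ^ (2 * m)) = z := by
  have hs' : ∀ t : GaloisField 2 m,
      (algebraMap (GaloisField 2 m) (AlgebraicClosure (GaloisField 2 m)) t) ^ (2 ^ m)
        = algebraMap (GaloisField 2 m) (AlgebraicClosure (GaloisField 2 m)) t := by
    intro t
    rw [← map_pow]
    congr 1
    have hcard : Fintype.card (GaloisField 2 m) = 2 ^ m := by
      rw [← Nat.card_eq_fintype_card, GaloisField.card 2 m hm]
    rw [← hcard]
    exact FiniteField.pow_card t
  generalize hsg : algebraMap (GaloisField 2 m) (AlgebraicClosure (GaloisField 2 m)) s = s'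
  have hsfix : s' ^ (2 ^ m) = s' := by rw [← hsg]; exact hs' s
  clear hsg hs'
  obtain ⟨z, hzroot⟩ := IsAlgClosed.exists_root
    (Polynomial.C 1 * Polynomial.X ^ 2 + Polynomial.C s' * Polynomial.X + Polynomial.C 1)
    (by rw [Polynomial.degree_quadratic one_ne_zero]; norm_num)
  have hroot : z ^ 2 + s' * z + 1 = 0 := by
    simpa [Polynomial.IsRoot] using hzroot
  clear hzroot
  have hz0 : z ≠ 0 := by
    intro h
    rw [h] at hroot
    simp at hroot
  have hinv : z + z⁻¹ = s' := by
    have h1 : z * (z + z⁻¹ + s') = 0 := by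
      have hzz : z * z⁻¹ = 1 := mul_inv_cancel₀ hz0
      have e : z * (z + z⁻¹ + s') = z ^ 2 + s' * z + 1 := by
        rw [mul_add, mul_add, hzz]; ring
      rw [e, hroot]
    rcases mul_eq_zero.mp h1 with h | h
    · exact absurd h hz0
    · have h2 : (2 : AlgebraicClosure (GaloisField 2 m)) = 0 := CharTwo.two_eq_zero
      linear_combination h - s' * h2
  have hwroot : (z ^ (2 ^ m)) ^ 2 + s' * (z ^ (2 ^ m)) + 1 = 0 := by
    have h2 : (z ^ 2 + s' * z + 1) ^ (2 ^ m) = 0 := by rw [hroot]; exact zero_pow (by positivity)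
    have h3 : (z ^ 2 + s' * z + 1) ^ (2 ^ m)
        = (z ^ 2) ^ (2 ^ m) + (s' * z) ^ (2 ^ m) + 1 ^ (2 ^ m) := by
      rw [add_pow_char_pow (hp := ⟨Nat.prime_two⟩), add_pow_char_pow (hp := ⟨Nat.prime_two⟩)]
    rw [h3] at h2
    calc (z ^ 2 ^ m) ^ 2 + s' * z ^ 2 ^ m + 1
        = (z ^ 2) ^ (2 ^ m) + (s' * z) ^ (2 ^ m) + 1 ^ (2 ^ m) := by
          rw [mul_pow, hsfix, one_pow, ← pow_mul, ← pow_mul, Nat.mul_comm]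
      _ = 0 := h2
  have hwz : z ^ (2 ^ m) = z ∨ z ^ (2 ^ m) = z⁻¹ := by
    have hd : (z ^ (2 ^ m) + z) * (z ^ (2 ^ m) + z + s') = 0 := by
      have h2 : (2 : AlgebraicClosure (GaloisField 2 m)) = 0 := CharTwo.two_eq_zero
      linear_combination hwroot + hroot + (z ^ (2 ^ m) * z - 1) * h2
    rcases mul_eq_zero.mp hd with h | h
    · left
      have h2 : (2 : AlgebraicClosure (GaloisField 2 m)) = 0 := CharTwo.two_eq_zero
      linear_combination h - z * h2
    · right
      have h2 : (2 : AlgebraicClosure (GaloisField 2 m)) = 0 := CharTwo.two_eq_zero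
      have hzs : z ^ (2 ^ m) = z + s' := by linear_combination h - z * h2 - s' * h2
      rw [hzs, ← hinv, ← add_assoc, CharTwo.add_self_eq_zero, zero_add]
  refine ⟨z, hz0, hinv, ?_⟩
  have h2m : 2 ^ (2 * m) = 2 ^ m * 2 ^ m := by rw [two_mul, pow_add]
  rw [h2m, pow_mul]
  rcases hwz with h | h
  · rw [h, h]
  · rw [h, inv_pow, h, inv_inv]

private def eps (a : ZMod 2) : ℤ := (-1) ^ a.val

private lemma eps_add (a b : ZMod 2) : eps (a + b) = eps a * eps b := by revert a b; decide
private lemma eps_one_add (a : ZMod 2) : eps (1 + a) = - eps a := by revert a; decide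
private lemma eps_zero : eps 0 = 1 := by decide
private lemma eps_eq (a : ZMod 2) : eps a = 1 - 2 * (a.val : ℤ) := by revert a; decide

section Field
variable {m : ℕ}

private lemma gf_pow_card (hm : m ≠ 0) (a : GaloisField 2 m) : a ^ (2 ^ m) = a := by
  have hcard : Fintype.card (GaloisField 2 m) = 2 ^ m := by
    rw [← Nat.card_eq_fintype_card, GaloisField.card 2 m hm]
  rw [← hcard]
  exact FiniteField.pow_card a

private lemma gf_frob_add (j : ℕ) (x y : GaloisField 2 m) :
    (x + y) ^ (2 ^ j) = x ^ (2 ^ j) + y ^ (2 ^ j) :=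
  add_pow_char_pow (hp := ⟨Nat.prime_two⟩) x y 2 j

private lemma trF_add (x y : GaloisField 2 m) : trF (x + y) = trF x + trF y := by
  unfold trF
  rw [← Finset.sum_add_distrib]
  exact Finset.sum_congr rfl fun i _ => gf_frob_add i x y

private lemma trF_zero : trF (0 : GaloisField 2 m) = 0 := by
  unfold trF
  apply Finset.sum_eq_zero
  intro i _
  exact zero_pow (by positivity)

private lemma trF_sq (hm : m ≠ 0) (x : GaloisField 2 m) : trF (x ^ 2) = trF x := by
  unfold trF
  have h1 : ∀ i, (x ^ 2) ^ (2 ^ i) = x ^ (2 ^ (i + 1)) := by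
    intro i
    rw [← pow_mul, ← pow_succ']
  rw [Finset.sum_congr rfl fun i _ => h1 i]
  have h2 : ∑ i ∈ Finset.range m, x ^ (2 ^ (i + 1))
      = (∑ i ∈ Finset.range (m + 1), x ^ (2 ^ i)) - x ^ (2 ^ 0) := by
    rw [Finset.sum_range_succ' (fun i => x ^ (2 ^ i)) m]
    ring
  rw [h2, Finset.sum_range_succ, gf_pow_card hm x, pow_zero, pow_one]
  rw [CharTwo.sub_eq_add]
  rw [add_assoc, CharTwo.add_self_eq_zero, add_zero]

private lemma trF_idem (hm : m ≠ 0) (x : GaloisField 2 m) : trF x = 0 ∨ trF x = 1 := by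
  have h : trF x * trF x = trF x := by
    have h1 : trF x * trF x = (trF x) ^ 2 := by ring
    have h2 : (trF x) ^ 2 = trF (x ^ 2) := by
      unfold trF
      rw [CharTwo.sum_sq]
      apply Finset.sum_congr rfl
      intro i _
      rw [← pow_mul, ← pow_mul, Nat.mul_comm]
    rw [h1, h2, trF_sq hm]
  rcases mul_eq_zero.mp (by linear_combination h : trF x * (trF x - 1) = 0) with h' | h'
  · exact Or.inl h'
  · exact Or.inr (by linear_combination h')

private lemma tr2_zero : tr2 (0 : GaloisField 2 m) = 0 := by
  unfold tr2
  rw [trF_zero]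
  simp

private lemma tr2_add (hm : m ≠ 0) (x y : GaloisField 2 m) :
    tr2 (x + y) = tr2 x + tr2 y := by
  unfold tr2
  rcases trF_idem hm x with hx | hx <;> rcases trF_idem hm y with hy | hy <;>
    rw [trF_add, hx, hy] <;> simp [zero_ne_one' (GaloisField 2 m)] <;> decide

private lemma tr2_sq (hm : m ≠ 0) (x : GaloisField 2 m) : tr2 (x ^ 2) = tr2 x := by
  unfold tr2
  rw [trF_sq hm]

private lemma exists_tr2_one (hm : m ≠ 0) : ∃ x₀ : GaloisField 2 m, tr2 x₀ = 1 := by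
  have hP : ∃ x₀ : GaloisField 2 m, trF x₀ ≠ 0 := by
    by_contra hc
    push_neg at hc
    set P : Polynomial (GaloisField 2 m) :=
      ∑ i ∈ Finset.range m, (Polynomial.X : Polynomial (GaloisField 2 m)) ^ (2 ^ i) with hPdef
    have heval : ∀ x : GaloisField 2 m, P.eval x = trF x := by
      intro x
      rw [hPdef, Polynomial.eval_finset_sum]
      unfold trF
      exact Finset.sum_congr rfl fun i _ => by rw [Polynomial.eval_pow, Polynomial.eval_X]
    have hdeg : P.natDegree ≤ 2 ^ (m - 1) := by
      rw [hPdef]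
      apply Polynomial.natDegree_sum_le_of_forall_le
      intro i hi
      rw [Polynomial.natDegree_X_pow]
      exact Nat.pow_le_pow_right (by norm_num) (by have := Finset.mem_range.mp hi; omega)
    have hcard : Fintype.card (GaloisField 2 m) = 2 ^ m := by
      rw [← Nat.card_eq_fintype_card, GaloisField.card 2 m hm]
    have hzero : P = 0 := by
      apply Polynomial.eq_zero_of_natDegree_lt_card_of_eval_eq_zero' P Finset.univ
      · intro x _
        rw [heval]; exact hc x
      · rw [Finset.card_univ, hcard]
        calc P.natDegree ≤ 2 ^ (m - 1) := hdeg
          _ < 2 ^ m := Nat.pow_lt_pow_right (by norm_num) (by omega)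
    have hcoeff : P.coeff (2 ^ (m - 1)) = 1 := by
      rw [hPdef, Polynomial.finset_sum_coeff]
      have hterm : ∀ i ∈ Finset.range m,
          (Polynomial.X ^ (2 ^ i) : Polynomial (GaloisField 2 m)).coeff (2 ^ (m - 1))
            = if i = m - 1 then 1 else 0 := by
        intro i _
        rw [Polynomial.coeff_X_pow]
        congr 1
        simp only [eq_iff_iff]
        constructor
        · intro h
          exact Nat.pow_right_injective (le_refl 2) h.symm
        · intro h
          rw [h]
      rw [Finset.sum_congr rfl hterm, Finset.sum_ite_eq' (Finset.range m) (m - 1) (fun _ => 1)]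
      rw [if_pos (Finset.mem_range.mpr (by omega))]
    rw [hzero] at hcoeff
    simp at hcoeff
  obtain ⟨x₀, hx₀⟩ := hP
  refine ⟨x₀, ?_⟩
  rcases trF_idem hm x₀ with h | h
  · exact absurd h hx₀
  · unfold tr2
    rw [h]
    simp

private lemma sum_eps_eq_zero {ℓ : GaloisField 2 m → ZMod 2}
    (hadd : ∀ a b, ℓ (a + b) = ℓ a + ℓ b) (x₀ : GaloisField 2 m) (h1 : ℓ x₀ = 1) :
    ∑ x : GaloisField 2 m, eps (ℓ x) = 0 := by
  have h : ∑ x : GaloisField 2 m, eps (ℓ x)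
      = ∑ x : GaloisField 2 m, eps (ℓ (x + x₀)) :=
    (Equiv.sum_comp (Equiv.addRight x₀) (fun y => eps (ℓ y))).symm
  have h2 : ∀ x, eps (ℓ (x + x₀)) = - eps (ℓ x) := by
    intro x
    rw [hadd, h1, add_comm, eps_one_add]
  have h4 : ∑ x : GaloisField 2 m, eps (ℓ (x + x₀))
      = - ∑ x : GaloisField 2 m, eps (ℓ x) := by
    rw [Finset.sum_congr rfl fun x _ => h2 x, Finset.sum_neg_distrib]
  have h3 := h.trans h4
  linarith

private lemma sum_eps_tr2_mul (hm : m ≠ 0) (a : GaloisField 2 m) (ha : a ≠ 0) :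
    ∑ x : GaloisField 2 m, eps (tr2 (a * x)) = 0 := by
  obtain ⟨x₁, hx₁⟩ := exists_tr2_one hm
  apply sum_eps_eq_zero (ℓ := fun x => tr2 (a * x))
    (fun b c => by show tr2 (a * (b + c)) = tr2 (a * b) + tr2 (a * c); rw [mul_add, tr2_add hm])
    (a⁻¹ * x₁)
  rw [← mul_assoc, mul_inv_cancel₀ ha, one_mul, hx₁]

end Field

private noncomputable def Rmap (m k : ℕ) (c : GaloisField 2 m) : GaloisField 2 m :=
  ∑ i ∈ Finset.range k, c ^ (2 ^ k + 1 - 2 ^ (i + 1))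

private lemma z_pow_modeq {m : ℕ} (z : AlgebraicClosure (GaloisField 2 m)) (hz : z ≠ 0)
    (hfix : z ^ (2 ^ (2 * m)) = z) (N : ℕ) (hN : N ≡ 1 [MOD 2 ^ (2 * m) - 1])
    (hN1 : 1 ≤ N) : z ^ N = z := by
  have hq1 : 1 ≤ 2 ^ (2 * m) := Nat.one_le_two_pow
  have hcyc : z ^ (2 ^ (2 * m) - 1) = 1 := by
    have h1 : z ^ (2 ^ (2 * m) - 1) * z = 1 * z := by
      rw [one_mul, ← pow_succ]
      have : 2 ^ (2 * m) - 1 + 1 = 2 ^ (2 * m) := by omega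
      rw [this, hfix]
    exact mul_right_cancel₀ hz h1
  have hdvd : 2 ^ (2 * m) - 1 ∣ N - 1 := (Nat.modEq_iff_dvd' hN1).mp hN.symm
  obtain ⟨c0, hc0⟩ := hdvd
  have hNe : N = (2 ^ (2 * m) - 1) * c0 + 1 := by omega
  rw [hNe, pow_add, pow_mul, hcyc, one_pow, pow_one, one_mul]

private lemma map_dicksonEval {m : ℕ} (d : ℕ) (t : GaloisField 2 m) :
    algebraMap (GaloisField 2 m) (AlgebraicClosure (GaloisField 2 m)) (dicksonEval d t)
      = ∑ i ∈ Finset.range (d / 2 + 1),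
          ((d * Nat.choose (d - i) i / (d - i) : ℕ) : AlgebraicClosure (GaloisField 2 m))
            * (algebraMap (GaloisField 2 m) (AlgebraicClosure (GaloisField 2 m)) t)
                ^ (d - 2 * i) := by
  unfold dicksonEval
  rw [map_sum]
  exact Finset.sum_congr rfl fun i _ => by rw [map_mul, map_natCast, map_pow]

private lemma map_Rmap {m : ℕ} (k : ℕ) (c : GaloisField 2 m) :
    algebraMap (GaloisField 2 m) (AlgebraicClosure (GaloisField 2 m)) (Rmap m k c)
      = ∑ i ∈ Finset.range k,
          (algebraMap (GaloisField 2 m) (AlgebraicClosure (GaloisField 2 m)) c)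
            ^ (2 ^ k + 1 - 2 ^ (i + 1)) := by
  unfold Rmap
  rw [map_sum]
  exact Finset.sum_congr rfl fun i _ => by rw [map_pow]

private lemma RD (m k d : ℕ) (hm : m ≠ 0) (hk : 1 ≤ k) (hdpos : 0 < d)
    (hd : d * (2 ^ k - 1) ≡ 1 [MOD 2 ^ (2 * m) - 1]) (t : GaloisField 2 m) :
    Rmap m k (dicksonEval d t) = t := by
  obtain ⟨z, hz0, hzs, hzfix⟩ := exists_unit_param m hm t
  apply (algebraMap (GaloisField 2 m) (AlgebraicClosure (GaloisField 2 m))).injective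
  have step1 : algebraMap (GaloisField 2 m) (AlgebraicClosure (GaloisField 2 m))
      (dicksonEval d t) = z ^ d + z⁻¹ ^ d := by
    rw [map_dicksonEval, ← hzs]
    exact dsum_add_inv d z hz0
  have hw0 : z ^ d ≠ 0 := pow_ne_zero d hz0
  have hwinv : (z ^ d)⁻¹ = z⁻¹ ^ d := by rw [inv_pow]
  have step2 : algebraMap (GaloisField 2 m) (AlgebraicClosure (GaloisField 2 m))
      (Rmap m k (dicksonEval d t))
      = (z ^ d) ^ (2 ^ k - 1) + ((z ^ d)⁻¹) ^ (2 ^ k - 1) := by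
    rw [map_Rmap, step1, ← hwinv]
    exact Rsum_param k (z ^ d) hw0
  rw [step2, ← pow_mul, ← hzs]
  have hN : z ^ (d * (2 ^ k - 1)) = z :=
    z_pow_modeq z hz0 hzfix (d * (2 ^ k - 1)) hd
      (by have h1 : 1 ≤ 2 ^ k - 1 := by
            have := Nat.one_lt_two_pow_iff (n := k)
            omega
          exact Nat.one_le_iff_ne_zero.mpr (by positivity))
  rw [hN]
  congr 1
  rw [inv_pow, ← pow_mul, hN]

private lemma DR (m k d : ℕ) (hm : m ≠ 0) (hk : 1 ≤ k) (hdpos : 0 < d)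
    (hd : d * (2 ^ k - 1) ≡ 1 [MOD 2 ^ (2 * m) - 1]) (s : GaloisField 2 m) :
    dicksonEval d (Rmap m k s) = s := by
  obtain ⟨z, hz0, hzs, hzfix⟩ := exists_unit_param m hm s
  apply (algebraMap (GaloisField 2 m) (AlgebraicClosure (GaloisField 2 m))).injective
  have hw0 : z ^ (2 ^ k - 1) ≠ 0 := pow_ne_zero _ hz0
  have step1 : algebraMap (GaloisField 2 m) (AlgebraicClosure (GaloisField 2 m))
      (Rmap m k s) = z ^ (2 ^ k - 1) + (z ^ (2 ^ k - 1))⁻¹ := by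
    rw [map_Rmap, ← hzs, ← inv_pow]
    exact Rsum_param k z hz0
  have step2 : algebraMap (GaloisField 2 m) (AlgebraicClosure (GaloisField 2 m))
      (dicksonEval d (Rmap m k s))
      = (z ^ (2 ^ k - 1)) ^ d + ((z ^ (2 ^ k - 1))⁻¹) ^ d := by
    rw [map_dicksonEval, step1]
    exact dsum_add_inv d _ hw0
  have hN : z ^ ((2 ^ k - 1) * d) = z := by
    rw [Nat.mul_comm]
    exact z_pow_modeq z hz0 hzfix (d * (2 ^ k - 1)) hd
      (by have h1 : 1 ≤ 2 ^ k - 1 := by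
            have := Nat.one_lt_two_pow_iff (n := k)
            omega
          exact Nat.one_le_iff_ne_zero.mpr (by positivity))
  rw [step2, ← pow_mul, hN, ← hzs]
  congr 1
  rw [inv_pow, ← pow_mul, hN]

private noncomputable def Qmap (m k : ℕ) (c x : GaloisField 2 m) : GaloisField 2 m :=
  ∑ i ∈ Finset.range k, c ^ (2 ^ k + 1 - 2 ^ (i + 1)) * x ^ (2 ^ (i + 1))

private lemma Qmap_eq (m k : ℕ) (c x : GaloisField 2 m) (hx : x ≠ 0) :
    Qmap m k c x = x ^ (2 ^ k + 1) * Rmap m k (c * x⁻¹) := by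
  unfold Qmap Rmap
  rw [Finset.mul_sum]
  apply Finset.sum_congr rfl
  intro i hi
  have hik : i + 1 ≤ k := Finset.mem_range.mp hi
  have hle : 2 ^ (i + 1) ≤ 2 ^ k := Nat.pow_le_pow_right (by norm_num) hik
  have hsplit : x ^ (2 ^ k + 1)
      = x ^ (2 ^ (i + 1)) * x ^ (2 ^ k + 1 - 2 ^ (i + 1)) := by
    rw [← pow_add]
    congr 1
    omega
  have hxe : x ^ (2 ^ k + 1 - 2 ^ (i + 1)) ≠ 0 := pow_ne_zero _ hx
  symm
  calc x ^ (2 ^ k + 1) * (c * x⁻¹) ^ (2 ^ k + 1 - 2 ^ (i + 1))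
      = c ^ (2 ^ k + 1 - 2 ^ (i + 1)) * (x ^ (2 ^ (i + 1))
          * (x ^ (2 ^ k + 1 - 2 ^ (i + 1)) * (x ^ (2 ^ k + 1 - 2 ^ (i + 1)))⁻¹)) := by
        rw [mul_pow, inv_pow, hsplit]; ring
    _ = c ^ (2 ^ k + 1 - 2 ^ (i + 1)) * x ^ (2 ^ (i + 1)) := by
        rw [mul_inv_cancel₀ hxe, mul_one]

private lemma Qmap_zero_right (m k : ℕ) (c : GaloisField 2 m) : Qmap m k c 0 = 0 := by
  unfold Qmap
  apply Finset.sum_eq_zero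
  intro i _
  rw [zero_pow (by positivity), mul_zero]

private lemma Qmap_add (m k : ℕ) (c x y : GaloisField 2 m) :
    Qmap m k c (x + y) = Qmap m k c x + Qmap m k c y := by
  unfold Qmap
  rw [← Finset.sum_add_distrib]
  apply Finset.sum_congr rfl
  intro i _
  rw [gf_frob_add, mul_add]

private lemma sigma_eq_iff (m k d : ℕ) (hm : m ≠ 0) (hk : 1 ≤ k) (hdpos : 0 < d)
    (hd : d * (2 ^ k - 1) ≡ 1 [MOD 2 ^ (2 * m) - 1]) (x y c : GaloisField 2 m)
    (hx : x ≠ 0) :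
    x * dicksonEval d (y ^ 2 * (x ^ (2 ^ k + 1))⁻¹) = c ↔ y ^ 2 = Qmap m k c x := by
  have hxp : x ^ (2 ^ k + 1) ≠ 0 := pow_ne_zero _ hx
  constructor
  · intro h
    have hD : dicksonEval d (y ^ 2 * (x ^ (2 ^ k + 1))⁻¹) = c * x⁻¹ := by
      rw [← h, mul_comm x (dicksonEval d (y ^ 2 * (x ^ (2 ^ k + 1))⁻¹)), mul_assoc,
        mul_inv_cancel₀ hx, mul_one]
    have ht : y ^ 2 * (x ^ (2 ^ k + 1))⁻¹ = Rmap m k (c * x⁻¹) := by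
      rw [← RD m k d hm hk hdpos hd (y ^ 2 * (x ^ (2 ^ k + 1))⁻¹), hD]
    rw [Qmap_eq m k c x hx, ← ht]
    field_simp
  · intro h
    have ht : y ^ 2 * (x ^ (2 ^ k + 1))⁻¹ = Rmap m k (c * x⁻¹) := by
      rw [h, Qmap_eq m k c x hx]
      field_simp
    rw [ht, DR m k d hm hk hdpos hd]
    field_simp

private noncomputable def sqr (m : ℕ) (x : GaloisField 2 m) : GaloisField 2 m :=
  x ^ (2 ^ (m - 1))

private lemma sqr_sq (hm : m ≠ 0) (x : GaloisField 2 m) : (sqr m x) ^ 2 = x := by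
  unfold sqr
  rw [← pow_mul]
  have h : 2 ^ (m - 1) * 2 = 2 ^ m := by
    rw [← pow_succ]
    congr 1
    omega
  rw [h]
  exact gf_pow_card hm x

private lemma sqr_of_sq (hm : m ≠ 0) (x : GaloisField 2 m) : sqr m (x ^ 2) = x := by
  unfold sqr
  rw [← pow_mul]
  have h : 2 * 2 ^ (m - 1) = 2 ^ m := by
    rw [← pow_succ']
    congr 1
    omega
  rw [h]
  exact gf_pow_card hm x

private lemma sqr_zero : sqr m (0 : GaloisField 2 m) = 0 := by
  unfold sqr
  exact zero_pow (by positivity)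

private noncomputable def Lmap (m k : ℕ) (c x : GaloisField 2 m) : GaloisField 2 m :=
  sqr m (Qmap m k c x)

private lemma Lmap_zero_right (c : GaloisField 2 m) (k : ℕ) : Lmap m k c 0 = 0 := by
  unfold Lmap
  rw [Qmap_zero_right, sqr_zero]

private lemma Lmap_add (hm : m ≠ 0) (k : ℕ) (c x y : GaloisField 2 m) :
    Lmap m k c (x + y) = Lmap m k c x + Lmap m k c y := by
  unfold Lmap sqr
  rw [Qmap_add, gf_frob_add]

private lemma sigma_Lmap (m k d : ℕ) (hm : m ≠ 0) (hk : 1 ≤ k) (hdpos : 0 < d)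
    (hd : d * (2 ^ k - 1) ≡ 1 [MOD 2 ^ (2 * m) - 1]) (x c : GaloisField 2 m)
    (hx : x ≠ 0) :
    x * dicksonEval d ((Lmap m k c x) ^ 2 * (x ^ (2 ^ k + 1))⁻¹) = c := by
  rw [sigma_eq_iff m k d hm hk hdpos hd x _ c hx]
  unfold Lmap
  exact sqr_sq hm _

private lemma Lmap_sigma (m k d : ℕ) (hm : m ≠ 0) (hk : 1 ≤ k) (hdpos : 0 < d)
    (hd : d * (2 ^ k - 1) ≡ 1 [MOD 2 ^ (2 * m) - 1]) (x y : GaloisField 2 m)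
    (hx : x ≠ 0) :
    Lmap m k (x * dicksonEval d (y ^ 2 * (x ^ (2 ^ k + 1))⁻¹)) x = y := by
  have h : y ^ 2 = Qmap m k (x * dicksonEval d (y ^ 2 * (x ^ (2 ^ k + 1))⁻¹)) x :=
    (sigma_eq_iff m k d hm hk hdpos hd x y _ hx).mp rfl
  unfold Lmap
  rw [← h]
  exact sqr_of_sq hm y

private lemma Lmap_bijective (m k d : ℕ) (hm : m ≠ 0) (hk : 1 ≤ k) (hdpos : 0 < d)
    (hd : d * (2 ^ k - 1) ≡ 1 [MOD 2 ^ (2 * m) - 1]) (x : GaloisField 2 m)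
    (hx : x ≠ 0) :
    Function.Bijective (fun c => Lmap m k c x) := by
  apply Function.bijective_iff_has_inverse.mpr
  refine ⟨fun y => x * dicksonEval d (y ^ 2 * (x ^ (2 ^ k + 1))⁻¹), ?_, ?_⟩
  · intro c
    exact sigma_Lmap m k d hm hk hdpos hd x c hx
  · intro y
    exact Lmap_sigma m k d hm hk hdpos hd x y hx

private lemma eps_pm (a : ZMod 2) : eps a = 1 ∨ eps a = -1 := by revert a; decide

theorem stmt2 (m k : ℕ) (hmpos : 0 < m) (hkpos : 0 < k) (hm : Odd m) (hk : Odd k)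
    (hkm : k < m) (hgcd : Nat.gcd k m = 1)
    (d : ℕ) (hdpos : 0 < d) (hd : d * (2 ^ k - 1) ≡ 1 [MOD 2 ^ (2 * m) - 1])
    (g : GaloisField 2 m → ZMod 2)
    (hbal : Nat.card {x : GaloisField 2 m // g x = 1} = 2 ^ (m - 1))
    (hg0 : g 0 = 0)
    (f : GaloisField 2 m × GaloisField 2 m → ZMod 2)
    (hf : ∀ x y, f (x, y) = g ((x * dicksonEval d (y ^ 2 * (x ^ (2 ^ k + 1))⁻¹))⁻¹)) :
    ∀ u v : GaloisField 2 m,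
      |∑ p : GaloisField 2 m × GaloisField 2 m,
          ((-1 : ℤ) ^ (f p + tr2 (u * p.1 + v * p.2)).val)| = 2 ^ m := by
  classical
  intro u v
  have hm0 : m ≠ 0 := by omega
  have hk1 : 1 ≤ k := hkpos
  have hcard : Fintype.card (GaloisField 2 m) = 2 ^ m := by
    rw [← Nat.card_eq_fintype_card, GaloisField.card 2 m hm0]
  have hone : (∑ _x : GaloisField 2 m, (1 : ℤ)) = 2 ^ m := by
    rw [Finset.sum_const, Finset.card_univ, hcard, nsmul_eq_mul, mul_one]
    push_cast
    ring
  set τ : GaloisField 2 m → ℤ :=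
    fun c => ∑ x : GaloisField 2 m, eps (tr2 (u * x + v * Lmap m k c x)) with hτ
  have hτc : ∀ c, τ c = ∑ x : GaloisField 2 m,
      eps (tr2 (u * x + v * Lmap m k c x)) := fun c => rfl
  -- rewrite the goal sum
  have hW : ∑ p : GaloisField 2 m × GaloisField 2 m,
      ((-1 : ℤ) ^ (f p + tr2 (u * p.1 + v * p.2)).val)
      = ∑ x : GaloisField 2 m, ∑ y : GaloisField 2 m,
          eps (f (x, y)) * eps (tr2 (u * x + v * y)) := by
    rw [Fintype.sum_prod_type]
    exact Finset.sum_congr rfl fun x _ => Finset.sum_congr rfl fun y _ => eps_add _ _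
  have hf0 : ∀ y, f (0, y) = (0 : ZMod 2) := by
    intro y
    rw [hf 0 y, zero_mul, inv_zero, hg0]
  have hrow0 : ∑ y : GaloisField 2 m, eps (f (0, y)) * eps (tr2 (u * 0 + v * y))
      = ∑ y : GaloisField 2 m, eps (tr2 (v * y)) := by
    apply Finset.sum_congr rfl
    intro y _
    rw [hf0 y, eps_zero, one_mul, mul_zero, zero_add]
  have hinner : ∀ x : GaloisField 2 m, x ≠ 0 →
      ∑ y : GaloisField 2 m, eps (f (x, y)) * eps (tr2 (u * x + v * y))
      = ∑ c : GaloisField 2 m, eps (g c⁻¹) * eps (tr2 (u * x + v * Lmap m k c x)) := by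
    intro x hx
    refine (Fintype.sum_bijective (fun c => Lmap m k c x)
      (Lmap_bijective m k d hm0 hk1 hdpos hd x hx)
      (fun c => eps (g c⁻¹) * eps (tr2 (u * x + v * Lmap m k c x)))
      (fun y => eps (f (x, y)) * eps (tr2 (u * x + v * y))) ?_).symm
    intro c
    have hfc : f (x, Lmap m k c x) = g c⁻¹ := by
      rw [hf x (Lmap m k c x), sigma_Lmap m k d hm0 hk1 hdpos hd x c hx]
    show eps (g c⁻¹) * eps (tr2 (u * x + v * Lmap m k c x))
      = eps (f (x, Lmap m k c x)) * eps (tr2 (u * x + v * Lmap m k c x))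
    rw [hfc]
  have hterm0 : ∀ c : GaloisField 2 m, tr2 (u * 0 + v * Lmap m k c 0) = 0 := by
    intro c
    rw [Lmap_zero_right, mul_zero, mul_zero, zero_add, tr2_zero]
  have hrows : ∀ c : GaloisField 2 m,
      ∑ x ∈ Finset.univ.erase (0 : GaloisField 2 m),
        eps (g c⁻¹) * eps (tr2 (u * x + v * Lmap m k c x))
      = eps (g c⁻¹) * (τ c - 1) := by
    intro c
    rw [← Finset.mul_sum]
    congr 1
    rw [Finset.sum_erase_eq_sub (Finset.mem_univ (0 : GaloisField 2 m))]
    rw [hterm0 c, eps_zero, hτc c]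
  have hstep : ∑ x ∈ Finset.univ.erase (0 : GaloisField 2 m),
      ∑ y : GaloisField 2 m, eps (f (x, y)) * eps (tr2 (u * x + v * y))
      = ∑ c : GaloisField 2 m, eps (g c⁻¹) * (τ c - 1) :=
    calc ∑ x ∈ Finset.univ.erase (0 : GaloisField 2 m),
        ∑ y : GaloisField 2 m, eps (f (x, y)) * eps (tr2 (u * x + v * y))
        = ∑ x ∈ Finset.univ.erase (0 : GaloisField 2 m),
            ∑ c : GaloisField 2 m, eps (g c⁻¹) * eps (tr2 (u * x + v * Lmap m k c x)) :=
          Finset.sum_congr rfl fun x hx => hinner x (Finset.ne_of_mem_erase hx)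
      _ = ∑ c : GaloisField 2 m, ∑ x ∈ Finset.univ.erase (0 : GaloisField 2 m),
            eps (g c⁻¹) * eps (tr2 (u * x + v * Lmap m k c x)) := Finset.sum_comm
      _ = ∑ c : GaloisField 2 m, eps (g c⁻¹) * (τ c - 1) :=
          Finset.sum_congr rfl fun c _ => hrows c
  have hval2 : ∀ a : ZMod 2, ((a.val : ℤ)) = if a = 1 then 1 else 0 := by decide
  have hbal1 : ∑ c : GaloisField 2 m, eps (g c) = 0 := by
    have h1 : ∀ c, eps (g c) = 1 - 2 * if g c = 1 then (1 : ℤ) else 0 := by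
      intro c; rw [eps_eq, hval2]
    rw [Finset.sum_congr rfl fun c _ => h1 c, Finset.sum_sub_distrib, ← Finset.mul_sum,
      Finset.sum_boole, hone]
    have hfil : (Finset.univ.filter (fun c => g c = 1)).card = 2 ^ (m - 1) := by
      rw [← Fintype.card_subtype, ← Nat.card_eq_fintype_card]
      exact hbal
    rw [hfil]
    have h2 : (2 : ℤ) ^ m = 2 * 2 ^ (m - 1) := by
      rw [← pow_succ']
      congr 1
      omega
    push_cast
    linarith
  have hbalinv : ∑ c : GaloisField 2 m, eps (g c⁻¹) = 0 := by
    rw [← hbal1]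
    exact Fintype.sum_equiv (Function.Involutive.toPerm _ (fun c : GaloisField 2 m => inv_inv c))
      (fun c => eps (g c⁻¹)) (fun c => eps (g c)) (fun c => rfl)
  rw [hW, ← Finset.add_sum_erase Finset.univ
    (fun x => ∑ y : GaloisField 2 m, eps (f (x, y)) * eps (tr2 (u * x + v * y)))
    (Finset.mem_univ (0 : GaloisField 2 m)), hrow0, hstep]
  rcases eq_or_ne v 0 with hv | hv
  · -- v = 0 : the transform value is 2^m
    subst hv
    have hy0 : ∑ y : GaloisField 2 m, eps (tr2 ((0 : GaloisField 2 m) * y)) = 2 ^ m := by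
      rw [Finset.sum_congr rfl fun y _ => by rw [zero_mul, tr2_zero, eps_zero], hone]
    rcases eq_or_ne u 0 with hu | hu
    · subst hu
      have hτ0 : ∀ c, τ c = 2 ^ m := by
        intro c
        rw [hτc c, Finset.sum_congr rfl fun x _ =>
          by rw [zero_mul, zero_mul, add_zero, tr2_zero, eps_zero], hone]
      have hz : ∑ c : GaloisField 2 m, eps (g c⁻¹) * (τ c - 1)
          = (∑ c : GaloisField 2 m, eps (g c⁻¹)) * (2 ^ m - 1) := by
        rw [Finset.sum_mul]
        exact Finset.sum_congr rfl fun c _ => by rw [hτ0 c]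
      rw [hy0, hz, hbalinv, zero_mul, add_zero]
      exact abs_of_nonneg (by positivity)
    · have hτ0 : ∀ c, τ c = 0 := by
        intro c
        rw [hτc c]
        rw [Finset.sum_congr rfl fun x _ => by rw [zero_mul, add_zero]]
        exact sum_eps_tr2_mul hm0 u hu
      have hz : ∑ c : GaloisField 2 m, eps (g c⁻¹) * (τ c - 1)
          = (∑ c : GaloisField 2 m, eps (g c⁻¹)) * (0 - 1) := by
        rw [Finset.sum_mul]
        exact Finset.sum_congr rfl fun c _ => by rw [hτ0 c]
      rw [hy0, hz, hbalinv, zero_mul, add_zero]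
      exact abs_of_nonneg (by positivity)
  · -- v ≠ 0
    have hy0 : ∑ y : GaloisField 2 m, eps (tr2 (v * y)) = 0 := sum_eps_tr2_mul hm0 v hv
    have hLadd : ∀ c a b, tr2 (u * (a + b) + v * Lmap m k c (a + b))
        = tr2 (u * a + v * Lmap m k c a) + tr2 (u * b + v * Lmap m k c b) := by
      intro c a b
      have harg : u * (a + b) + v * Lmap m k c (a + b)
          = (u * a + v * Lmap m k c a) + (u * b + v * Lmap m k c b) := by
        rw [Lmap_add hm0]
        ring
      rw [harg, tr2_add hm0]
    have htau01 : ∀ c, τ c = 2 ^ m ∨ τ c = 0 := by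
      intro c
      by_cases hall : ∀ x, tr2 (u * x + v * Lmap m k c x) = 0
      · left
        rw [hτc c, Finset.sum_congr rfl fun x _ => by rw [hall x, eps_zero], hone]
      · right
        push_neg at hall
        obtain ⟨x₀, hx₀⟩ := hall
        have h1 : tr2 (u * x₀ + v * Lmap m k c x₀) = 1 := by
          have : ∀ a : ZMod 2, a ≠ 0 → a = 1 := by decide
          exact this _ hx₀
        rw [hτc c]
        exact sum_eps_eq_zero (ℓ := fun x => tr2 (u * x + v * Lmap m k c x))
          (fun a b => hLadd c a b) x₀ h1
    have htsum : ∑ c : GaloisField 2 m, τ c = 2 ^ m := by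
      have hswap : ∑ c : GaloisField 2 m, τ c
          = ∑ x : GaloisField 2 m, ∑ c : GaloisField 2 m,
              eps (tr2 (u * x + v * Lmap m k c x)) := by
        rw [Finset.sum_congr rfl fun c _ => hτc c]
        exact Finset.sum_comm
      rw [hswap, ← Finset.add_sum_erase Finset.univ
        (fun x => ∑ c : GaloisField 2 m, eps (tr2 (u * x + v * Lmap m k c x)))
        (Finset.mem_univ (0 : GaloisField 2 m))]
      have hx0 : ∑ c : GaloisField 2 m, eps (tr2 (u * 0 + v * Lmap m k c 0)) = 2 ^ m := by
        rw [Finset.sum_congr rfl fun c _ => by rw [hterm0 c, eps_zero], hone]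
      have hrest : ∑ x ∈ Finset.univ.erase (0 : GaloisField 2 m),
          ∑ c : GaloisField 2 m, eps (tr2 (u * x + v * Lmap m k c x)) = 0 := by
        apply Finset.sum_eq_zero
        intro x hx
        have hxne : x ≠ 0 := Finset.ne_of_mem_erase hx
        have hre : ∑ c : GaloisField 2 m, eps (tr2 (u * x + v * Lmap m k c x))
            = ∑ y : GaloisField 2 m, eps (tr2 (u * x + v * y)) :=
          Fintype.sum_bijective (fun c => Lmap m k c x)
            (Lmap_bijective m k d hm0 hk1 hdpos hd x hxne)
            _ _ (fun c => rfl)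
        rw [hre, Finset.sum_congr rfl fun y _ =>
          by rw [tr2_add hm0, eps_add], ← Finset.mul_sum,
          sum_eps_tr2_mul hm0 v hv, mul_zero]
      rw [hx0, hrest, add_zero]
    set P : Finset (GaloisField 2 m) := Finset.univ.filter (fun c => τ c = 2 ^ m) with hP
    have hsplit : ∑ c : GaloisField 2 m, τ c = (P.card : ℤ) * 2 ^ m := by
      rw [← Finset.sum_filter_add_sum_filter_not Finset.univ (fun c => τ c = 2 ^ m) τ]
      have h1 : ∑ c ∈ P, τ c = (P.card : ℤ) * 2 ^ m := by
        rw [Finset.sum_congr rfl fun c hc => (Finset.mem_filter.mp hc).2,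
          Finset.sum_const, nsmul_eq_mul]
      have h2 : ∑ c ∈ Finset.univ.filter (fun c => ¬ τ c = 2 ^ m), τ c = 0 := by
        apply Finset.sum_eq_zero
        intro c hc
        rcases htau01 c with h | h
        · exact absurd h (Finset.mem_filter.mp hc).2
        · exact h
      rw [h1, h2, add_zero]
    have hcardP : P.card = 1 := by
      have h1 : (P.card : ℤ) * 2 ^ m = 2 ^ m := by rw [← hsplit, htsum]
      rw [mul_eq_right₀ (by positivity)] at h1
      exact_mod_cast h1
    obtain ⟨c₀, hc₀⟩ := Finset.card_eq_one.mp hcardP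
    have hmain : ∑ c : GaloisField 2 m, eps (g c⁻¹) * (τ c - 1)
        = eps (g c₀⁻¹) * 2 ^ m := by
      have hsub : ∑ c : GaloisField 2 m, eps (g c⁻¹) * (τ c - 1)
          = ∑ c : GaloisField 2 m, eps (g c⁻¹) * τ c
            - ∑ c : GaloisField 2 m, eps (g c⁻¹) := by
        rw [← Finset.sum_sub_distrib]
        exact Finset.sum_congr rfl fun c _ => by ring
      rw [hsub, hbalinv, sub_zero]
      rw [← Finset.sum_filter_add_sum_filter_not Finset.univ (fun c => τ c = 2 ^ m)
        (fun c => eps (g c⁻¹) * τ c)]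
      have h2 : ∑ c ∈ Finset.univ.filter (fun c => ¬ τ c = 2 ^ m),
          eps (g c⁻¹) * τ c = 0 := by
        apply Finset.sum_eq_zero
        intro c hc
        rcases htau01 c with h | h
        · exact absurd h (Finset.mem_filter.mp hc).2
        · rw [h, mul_zero]
      have h1 : ∑ c ∈ Finset.univ.filter (fun c => τ c = 2 ^ m),
          eps (g c⁻¹) * τ c = eps (g c₀⁻¹) * 2 ^ m := by
        have : Finset.univ.filter (fun c => τ c = 2 ^ m) = {c₀} := hc₀
        rw [this, Finset.sum_singleton]
        have hc₀P : c₀ ∈ P := by rw [hc₀]; exact Finset.mem_singleton_self c₀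
        rw [(Finset.mem_filter.mp hc₀P).2]
      rw [h1, h2, add_zero]
    rw [hy0, hmain, zero_add]
    rcases eps_pm (g c₀⁻¹) with h | h
    · rw [h, one_mul]
      exact abs_of_nonneg (by positivity)
    · rw [h, neg_one_mul, abs_neg]
      exact abs_of_nonneg (by positivity)
end
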